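/- Let (X₀,X₁) be a positive Calderón couple of Banach lattices of measurable functions on a common measure space (Ω,Σ,μ), and suppose that X₀ and X₁ are both complete lattices (i.e., have the Least Upper Bound Property). Then for every p ∈ (1,∞), the couple of p-convexifications (X₀^(p), X₁^(p)) is a Calderón couple. -/

import Mathlib

open MeasureTheory

/-- A Banach lattice of (a.e.-equivalence classes of) real-valued measurable
functions on a measure space `(Ω, μ)`: a linear subspace of `Ω →ₘ[μ] ℝ` with a complete
norm satisfying the lattice (ideal) property. -/
structure BanachFunctionLattice (Ω : Type*) [MeasurableSpace Ω] (μ : MeasureTheory.Measure Ω) where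
  carrier : Set (Ω →ₘ[μ] ℝ)
  norm : (Ω →ₘ[μ] ℝ) → ℝ
  zero_mem : 0 ∈ carrier
  add_mem : ∀ {f g}, f ∈ carrier → g ∈ carrier → f + g ∈ carrier
  smul_mem : ∀ (c : ℝ) {f}, f ∈ carrier → c • f ∈ carrier
  norm_nonneg : ∀ f ∈ carrier, 0 ≤ norm f
  norm_eq_zero_iff : ∀ f ∈ carrier, (norm f = 0 ↔ f = 0)
  norm_add_le : ∀ f ∈ carrier, ∀ g ∈ carrier, norm (f + g) ≤ norm f + norm g
  norm_smul : ∀ (c : ℝ), ∀ f ∈ carrier, norm (c • f) = |c| * norm f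
  ideal_mem : ∀ f ∈ carrier, ∀ g : (Ω →ₘ[μ] ℝ), |g| ≤ |f| → g ∈ carrier
  ideal_norm_le : ∀ f ∈ carrier, ∀ g : (Ω →ₘ[μ] ℝ), |g| ≤ |f| → norm g ≤ norm f
  complete : ∀ u : ℕ → (Ω →ₘ[μ] ℝ), (∀ n, u n ∈ carrier) →
    (∀ ε > 0, ∃ N, ∀ m ≥ N, ∀ n ≥ N, norm (u m - u n) < ε) →
    ∃ f ∈ carrier, ∀ ε > 0, ∃ N, ∀ n ≥ N, norm (u n - f) < ε

variable {Ω : Type*} [MeasurableSpace Ω] {μ : MeasureTheory.Measure Ω}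

/-- The a.e.-equivalence class of `ω ↦ |f ω| ^ p` (real power). -/
noncomputable def absRpow (p : ℝ) (f : Ω →ₘ[μ] ℝ) : Ω →ₘ[μ] ℝ :=
  AEEqFun.mk (fun ω => |f ω| ^ p)
    (((by measurability : Measurable fun x : ℝ => |x| ^ p).comp_aemeasurable
      f.aemeasurable).aestronglyMeasurable)

/-- A (not necessarily complete) normed function space: the data of a carrier and a norm.
Used to speak about `p`-convexifications without re-proving all the axioms. -/
structure FunctionSpace (Ω : Type*) [MeasurableSpace Ω] (μ : MeasureTheory.Measure Ω) where
  carrier : Set (Ω →ₘ[μ] ℝ)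
  norm : (Ω →ₘ[μ] ℝ) → ℝ

/-- The carrier-and-norm data underlying a Banach function lattice. -/
def BanachFunctionLattice.toFunctionSpace (X : BanachFunctionLattice Ω μ) :
    FunctionSpace Ω μ := ⟨X.carrier, X.norm⟩

/-- The `p`-convexification `X^(p)`: all `f` with `|f|^p ∈ X`, with norm `‖|f|^p‖_X^(1/p)`. -/
noncomputable def pConv (X : BanachFunctionLattice Ω μ) (p : ℝ) : FunctionSpace Ω μ where
  carrier := {f | absRpow p f ∈ X.carrier}
  norm := fun f => (X.norm (absRpow p f)) ^ (1 / p)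

/-- The sum space `X₀ + X₁` (as a set). -/
def sumSet (A₀ A₁ : FunctionSpace Ω μ) : Set (Ω →ₘ[μ] ℝ) :=
  {f | ∃ a₀ ∈ A₀.carrier, ∃ a₁ ∈ A₁.carrier, f = a₀ + a₁}

/-- The Peetre `K`-functional `K(t, f; A₀, A₁)`. -/
noncomputable def Kfun (A₀ A₁ : FunctionSpace Ω μ) (t : ℝ) (f : Ω →ₘ[μ] ℝ) : ℝ :=
  sInf {r | ∃ a₀ ∈ A₀.carrier, ∃ a₁ ∈ A₁.carrier,
    f = a₀ + a₁ ∧ r = A₀.norm a₀ + t * A₁.norm a₁}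

/-- The norm of the sum space `X₀ + X₁`, namely `K(1, ·)`. -/
noncomputable def sumNorm (A₀ A₁ : FunctionSpace Ω μ) (f : Ω →ₘ[μ] ℝ) : ℝ :=
  Kfun A₀ A₁ 1 f

/-- The functional `D(t, f; A₀, A₁)`, the analogue of the `K`-functional restricted to
disjointly supported decompositions. -/
noncomputable def Dfun (A₀ A₁ : FunctionSpace Ω μ) (t : ℝ) (f : Ω →ₘ[μ] ℝ) : ℝ :=
  sInf {r | ∃ a₀ ∈ A₀.carrier, ∃ a₁ ∈ A₁.carrier,
    f = a₀ + a₁ ∧ a₀ * a₁ = 0 ∧ r = A₀.norm a₀ + t * A₁.norm a₁}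

/-- `T : (A₀, A₁) → (A₀, A₁)` is a bounded linear operator: `T` is linear on `A₀ + A₁`
and its restriction to each `Aⱼ` is a bounded operator from `Aⱼ` into itself. -/
def IsBoundedCoupleOperator (A₀ A₁ : FunctionSpace Ω μ) (T : (Ω →ₘ[μ] ℝ) → (Ω →ₘ[μ] ℝ)) :
    Prop :=
  (∀ f ∈ sumSet A₀ A₁, ∀ g ∈ sumSet A₀ A₁, T (f + g) = T f + T g) ∧
  (∀ (c : ℝ), ∀ f ∈ sumSet A₀ A₁, T (c • f) = c • T f) ∧
  (∀ f ∈ A₀.carrier, T f ∈ A₀.carrier) ∧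
  (∀ f ∈ A₁.carrier, T f ∈ A₁.carrier) ∧
  (∃ C₀ : ℝ, ∀ f ∈ A₀.carrier, A₀.norm (T f) ≤ C₀ * A₀.norm f) ∧
  (∃ C₁ : ℝ, ∀ f ∈ A₁.carrier, A₁.norm (T f) ≤ C₁ * A₁.norm f)

/-- `‖T‖_{Aⱼ → Aⱼ} ≤ C` for `j = 0, 1`. -/
def CoupleOperatorNormLE (A₀ A₁ : FunctionSpace Ω μ) (T : (Ω →ₘ[μ] ℝ) → (Ω →ₘ[μ] ℝ))
    (C : ℝ) : Prop :=
  (∀ f ∈ A₀.carrier, A₀.norm (T f) ≤ C * A₀.norm f) ∧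
  (∀ f ∈ A₁.carrier, A₁.norm (T f) ≤ C * A₁.norm f)

/-- `T` is a positive operator on `A₀ + A₁`. -/
def IsPositiveOn (A₀ A₁ : FunctionSpace Ω μ) (T : (Ω →ₘ[μ] ℝ) → (Ω →ₘ[μ] ℝ)) : Prop :=
  ∀ h ∈ sumSet A₀ A₁, 0 ≤ h → 0 ≤ T h

/-- `(A₀, A₁)` is a Calderón couple. -/
def IsCalderonCouple (A₀ A₁ : FunctionSpace Ω μ) : Prop :=
  ∀ f ∈ sumSet A₀ A₁, ∀ g ∈ sumSet A₀ A₁,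
    (∀ t > 0, Kfun A₀ A₁ t g ≤ Kfun A₀ A₁ t f) →
    ∃ T, IsBoundedCoupleOperator A₀ A₁ T ∧ T f = g

/-- `(A₀, A₁)` is a `C`-Calderón couple. -/
def IsCCalderonCouple (A₀ A₁ : FunctionSpace Ω μ) (C : ℝ) : Prop :=
  ∀ f ∈ sumSet A₀ A₁, ∀ g ∈ sumSet A₀ A₁,
    (∀ t > 0, Kfun A₀ A₁ t g ≤ Kfun A₀ A₁ t f) →
    ∃ T, IsBoundedCoupleOperator A₀ A₁ T ∧ T f = g ∧ CoupleOperatorNormLE A₀ A₁ T C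

/-- `(A₀, A₁)` is a positive Calderón couple. -/
def IsPositiveCalderonCouple (A₀ A₁ : FunctionSpace Ω μ) : Prop :=
  ∀ f ∈ sumSet A₀ A₁, ∀ g ∈ sumSet A₀ A₁, 0 ≤ f → 0 ≤ g →
    (∀ t > 0, Kfun A₀ A₁ t g ≤ Kfun A₀ A₁ t f) →
    ∃ T, IsBoundedCoupleOperator A₀ A₁ T ∧ IsPositiveOn A₀ A₁ T ∧ T f = g

/-- `(A₀, A₁)` is a positive `C`-Calderón couple. -/
def IsPositiveCCalderonCouple (A₀ A₁ : FunctionSpace Ω μ) (C : ℝ) : Prop :=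
  ∀ f ∈ sumSet A₀ A₁, ∀ g ∈ sumSet A₀ A₁, 0 ≤ f → 0 ≤ g →
    (∀ t > 0, Kfun A₀ A₁ t g ≤ Kfun A₀ A₁ t f) →
    ∃ T, IsBoundedCoupleOperator A₀ A₁ T ∧ IsPositiveOn A₀ A₁ T ∧ T f = g ∧
      CoupleOperatorNormLE A₀ A₁ T C

/-- A set `S` of (classes of) measurable functions has the Least Upper Bound Property:
every nonempty subset of `S` bounded above by an element of `S` has a least upper bound
in `S` (for the a.e. pointwise order). -/
def HasLUBP (S : Set (Ω →ₘ[μ] ℝ)) : Prop :=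
  ∀ A ⊆ S, A.Nonempty → (∃ b ∈ S, ∀ a ∈ A, a ≤ b) →
    ∃ y ∈ S, (∀ a ∈ A, a ≤ y) ∧ ∀ z ∈ S, (∀ a ∈ A, a ≤ z) → y ≤ z


section Helpers
open Real Filter

-- R1
lemma helper_rpow_add_le {p x y : ℝ} (hp : 0 ≤ p) (hx : 0 ≤ x) (hy : 0 ≤ y) :
    (x + y) ^ p ≤ 2 ^ p * (x ^ p + y ^ p) := by
  have h1 : x + y ≤ 2 * max x y := by
    rcases le_total x y with h | h
    · calc x + y ≤ y + y := by linarith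
      _ = 2 * max x y := by rw [max_eq_right h]; ring
    · calc x + y ≤ x + x := by linarith
      _ = 2 * max x y := by rw [max_eq_left h]; ring
  have h0 : (0:ℝ) ≤ max x y := le_max_of_le_left hx
  calc (x+y)^p ≤ (2 * max x y)^p := Real.rpow_le_rpow (by linarith) h1 hp
    _ = 2^p * (max x y)^p := Real.mul_rpow (by norm_num) h0
    _ ≤ 2^p * (x^p + y^p) := by
        apply mul_le_mul_of_nonneg_left _ (Real.rpow_nonneg (by norm_num) p)
        rcases le_total x y with h | h
        · rw [max_eq_right h]; nlinarith [Real.rpow_nonneg hx p]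
        · rw [max_eq_left h]; nlinarith [Real.rpow_nonneg hy p]

-- R2 subadditivity for exponent ≤ 1
lemma helper_rpow_subadd {r x y : ℝ} (hr0 : 0 ≤ r) (hr1 : r ≤ 1) (hx : 0 ≤ x) (hy : 0 ≤ y) :
    (x + y) ^ r ≤ x ^ r + y ^ r := by
  have key := NNReal.rpow_add_le_add_rpow (x.toNNReal) (y.toNNReal) hr0 hr1
  have := NNReal.coe_le_coe.mpr key
  push_cast [NNReal.coe_rpow, Real.coe_toNNReal _ hx, Real.coe_toNNReal _ hy] at this
  exact this

-- clip to [-a, a]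
noncomputable def clipSym (x a : ℝ) : ℝ := max (min x a) (-a)

lemma clipSym_abs_le {x a : ℝ} (ha : 0 ≤ a) : |clipSym x a| ≤ a := by
  rw [abs_le]; constructor
  · exact le_max_right _ _
  · exact max_le (min_le_right _ _) (by linarith)

lemma clipSym_sub_abs_le {x a b : ℝ} (ha : 0 ≤ a) (hb : 0 ≤ b) (h : |x| ≤ a + b) :
    |x - clipSym x a| ≤ b := by
  rw [abs_le] at h ⊢
  unfold clipSym
  rcases le_total x a with h1 | h1
  · rcases le_total (-a) x with h2 | h2
    · rw [min_eq_left h1, max_eq_left h2]; constructor <;> linarith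
    · rw [max_eq_right (by rw [min_eq_left h1] at *; exact h2)]; constructor <;> linarith
  · rw [min_eq_right h1, max_eq_left (by linarith)]; constructor <;> linarith

-- clip to [0, m]
noncomputable def clipPos (x m : ℝ) : ℝ := max (min x m) 0

lemma clipPos_nonneg (x m : ℝ) : 0 ≤ clipPos x m := le_max_right _ _
lemma clipPos_le_self {x m : ℝ} (hm : 0 ≤ m) : clipPos x m ≤ m :=
  max_le (min_le_right _ _) hm
lemma clipPos_abs_le {x m : ℝ} : clipPos x m ≤ |x| := by
  unfold clipPos
  rcases le_total x 0 with h | h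
  · rw [max_eq_right (le_trans (min_le_left _ _) h)]; exact abs_nonneg x
  · exact max_le (le_trans (min_le_left _ _) (le_abs_self x)) (abs_nonneg x)
lemma clipPos_sub_le {x m : ℝ} (hm : 0 ≤ m) : m - clipPos x m ≤ |m - x| := by
  unfold clipPos
  rcases le_total x 0 with h | h
  · rw [max_eq_right (le_trans (min_le_left _ _) h)]
    calc m - 0 = m := by ring
      _ ≤ |m - x| := le_trans (by linarith) (le_abs_self _)
  · rcases le_total x m with h1 | h1
    · rw [min_eq_left h1, max_eq_left h]
      exact le_trans (le_abs_self _) le_rfl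
    · rw [min_eq_right h1, max_eq_left hm]; simp [abs_nonneg]

-- Young with parameter θ
lemma helper_young {p x y θ : ℝ} (hp : 1 < p) (hx : 0 ≤ x) (hy : 0 ≤ y) (hθ : 0 < θ) :
    x ^ (1 - 1/p) * y ^ (1/p) ≤ (1 - 1/p) * (θ * x) + (1/p) * (θ ^ (1-p) * y) := by
  have hp0 : (0:ℝ) < p := by linarith
  set p' : ℝ := p / (p - 1) with hp'def
  have hconj : p'.HolderConjugate p := (Real.HolderConjugate.conjExponent hp).symm
  have hθx : 0 ≤ θ * x := by positivity
  have hθy : 0 ≤ θ ^ (1-p) * y := mul_nonneg (Real.rpow_nonneg hθ.le _) hy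
  have hinv : (p':ℝ)⁻¹ = 1 - 1/p := by
    have h := hconj.inv_add_inv_eq_one
    rw [inv_eq_one_div p] at h; linarith
  have key := Real.young_inequality ((θ*x) ^ (1 - 1/p)) ((θ^(1-p)*y) ^ (1/p)) hconj
  have e1 : |(θ*x) ^ (1 - 1/p)| ^ p' = θ * x := by
    rw [abs_of_nonneg (Real.rpow_nonneg hθx _), ← Real.rpow_mul hθx]
    have : (1 - 1/p) * p' = 1 := by rw [← hinv, inv_mul_cancel₀ hconj.ne_zero]
    rw [this, Real.rpow_one]
  have e2 : |(θ^(1-p)*y) ^ (1/p)| ^ p = θ^(1-p) * y := by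
    rw [abs_of_nonneg (Real.rpow_nonneg hθy _), ← Real.rpow_mul hθy]
    have : (1/p) * p = 1 := by field_simp
    rw [this, Real.rpow_one]
  have e3 : (θ*x) ^ (1 - 1/p) * (θ^(1-p)*y) ^ (1/p) = x ^ (1-1/p) * y ^ (1/p) := by
    rw [Real.mul_rpow hθ.le hx, Real.mul_rpow (Real.rpow_nonneg hθ.le _) hy,
      ← Real.rpow_mul hθ.le]
    have : θ ^ (1 - 1/p) * θ ^ ((1-p) * (1/p)) = 1 := by
      rw [← Real.rpow_add hθ]
      have : (1 - 1/p) + (1-p) * (1/p) = 0 := by field_simp; ring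
      rw [this, Real.rpow_zero]
    calc θ ^ (1 - 1/p) * x ^ (1-1/p) * (θ ^ ((1-p)*(1/p)) * y ^ (1/p))
        = (θ ^ (1 - 1/p) * θ ^ ((1-p) * (1/p))) * (x ^ (1-1/p) * y ^ (1/p)) := by ring
      _ = x ^ (1-1/p) * y ^ (1/p) := by rw [this, one_mul]
  rw [e1, e2, e3] at key
  have hq : 1 / p' = 1 - 1/p := by rw [one_div, hinv]
  calc x ^ (1-1/p) * y ^ (1/p) ≤ (θ*x)/p' + (θ^(1-p)*y)/p := key
    _ = (1 - 1/p) * (θ * x) + (1/p) * (θ ^ (1-p) * y) := by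
        rw [div_eq_mul_one_div, div_eq_mul_one_div, hq]; ring

lemma helper_young_inf_pos {p z x y : ℝ} (hp : 1 < p) (hx : 0 < x) (hy : 0 < y)
    (h : ∀ q : ℚ, 0 < (q:ℝ) → z ≤ (1 - 1/p) * ((q:ℝ) * x) + (1/p) * ((q:ℝ) ^ (1-p) * y)) :
    z ≤ (1 + 2^(p-1)) * (x ^ (1 - 1/p) * y ^ (1/p)) := by
  have hp0 : (0:ℝ) < p := by linarith
  set θ : ℝ := (y/x) ^ (1/p) with hθdef
  have hθ : 0 < θ := Real.rpow_pos_of_pos (div_pos hy hx) _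
  obtain ⟨q, hq1, hq2⟩ := exists_rat_btwn (half_lt_self hθ)
  have hq0 : 0 < (q:ℝ) := lt_trans (half_pos hθ) hq1
  set R : ℝ := x ^ (1 - 1/p) * y ^ (1/p) with hRdef
  have hR0 : 0 ≤ R := mul_nonneg (Real.rpow_nonneg hx.le _) (Real.rpow_nonneg hy.le _)
  have ex : x ^ (1-1/p) = x / x^(1/p) := by
    rw [show (1:ℝ)-1/p = 1 - 1/p from rfl, Real.rpow_sub hx, Real.rpow_one]
  have hR1 : θ * x = R := by
    rw [hθdef, Real.div_rpow hy.le hx.le, hRdef, ex]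
    field_simp
  have hR2 : θ ^ (1-p) * y = R := by
    have e1 : θ ^ (1-p) = θ * θ ^ (-p) := by
      rw [show (1:ℝ)-p = 1 + (-p) by ring, Real.rpow_add hθ, Real.rpow_one]
    have e2 : θ ^ (-p) = x / y := by
      rw [hθdef, ← Real.rpow_mul (div_pos hy hx).le]
      have e : (1/p) * (-p) = -1 := by field_simp
      rw [e, Real.rpow_neg_one, inv_div]
    rw [e1, e2, ← hR1]
    field_simp
  have hmono1 : (q:ℝ) * x ≤ θ * x := mul_le_mul_of_nonneg_right hq2.le hx.le
  have hmono2 : (q:ℝ) ^ (1-p) * y ≤ (θ/2) ^ (1-p) * y := by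
    apply mul_le_mul_of_nonneg_right _ hy.le
    exact Real.rpow_le_rpow_of_nonpos (half_pos hθ) hq1.le (by linarith)
  have e3 : (θ/2) ^ (1-p) = 2^(p-1) * θ^(1-p) := by
    rw [div_eq_mul_inv, Real.mul_rpow hθ.le (by norm_num), ← Real.rpow_neg_one (2:ℝ),
      ← Real.rpow_mul (by norm_num : (0:ℝ) ≤ 2)]
    ring_nf
  have hco1 : (0:ℝ) ≤ 1 - 1/p := by
    have : 1/p < 1 := by rw [div_lt_one hp0]; exact hp
    linarith
  have hco2 : (0:ℝ) ≤ 1/p := by positivity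
  calc z ≤ (1 - 1/p) * ((q:ℝ) * x) + (1/p) * ((q:ℝ) ^ (1-p) * y) := h q hq0
    _ ≤ (1 - 1/p) * (θ * x) + (1/p) * ((θ/2) ^ (1-p) * y) := by
        apply add_le_add (mul_le_mul_of_nonneg_left hmono1 hco1)
          (mul_le_mul_of_nonneg_left hmono2 hco2)
    _ = (1 - 1/p) * R + (1/p) * (2^(p-1) * R) := by rw [hR1, e3, mul_assoc, hR2]
    _ ≤ 1 * R + 1 * (2^(p-1) * R) := by
        apply add_le_add (mul_le_mul_of_nonneg_right (by linarith) hR0)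
        apply mul_le_mul_of_nonneg_right _ (by positivity)
        rw [div_le_one hp0]; linarith
    _ = (1 + 2^(p-1)) * R := by ring

lemma helper_young_inf {p z x y : ℝ} (hp : 1 < p) (hx : 0 ≤ x) (hy : 0 ≤ y)
    (h : ∀ q : ℚ, 0 < (q:ℝ) → z ≤ (1 - 1/p) * ((q:ℝ) * x) + (1/p) * ((q:ℝ) ^ (1-p) * y)) :
    z ≤ (1 + 2^(p-1)) * (x ^ (1 - 1/p) * y ^ (1/p)) := by
  have hp0 : (0:ℝ) < p := by linarith
  have hco1 : (0:ℝ) ≤ 1 - 1/p := by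
    have : 1/p < 1 := by rw [div_lt_one hp0]; exact hp
    linarith
  have hco2 : (0:ℝ) ≤ 1/p := by positivity
  have key : ∀ ε > 0, z ≤ (1 + 2^(p-1)) * ((x+ε) ^ (1 - 1/p) * (y+ε) ^ (1/p)) := by
    intro ε hε
    apply helper_young_inf_pos hp (by linarith) (by linarith)
    intro q hq
    refine le_trans (h q hq) ?_
    apply add_le_add
    · apply mul_le_mul_of_nonneg_left _ hco1
      apply mul_le_mul_of_nonneg_left (by linarith) hq.le
    · apply mul_le_mul_of_nonneg_left _ hco2
      apply mul_le_mul_of_nonneg_left (by linarith) (Real.rpow_nonneg hq.le _)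
  have htend : Filter.Tendsto (fun ε : ℝ => (1 + 2^(p-1)) * ((x+ε) ^ (1 - 1/p) * (y+ε) ^ (1/p)))
      (nhdsWithin 0 (Set.Ioi 0)) (nhds ((1 + 2^(p-1)) * (x ^ (1 - 1/p) * y ^ (1/p)))) := by
    have h1 : Filter.Tendsto (fun ε : ℝ => x + ε) (nhdsWithin 0 (Set.Ioi 0)) (nhds x) := by
      have h0 : Continuous (fun ε : ℝ => x + ε) := continuous_const.add continuous_id
      have := h0.tendsto (0:ℝ)
      simp only [add_zero] at this
      exact this.mono_left nhdsWithin_le_nhds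
    have h2 : Filter.Tendsto (fun ε : ℝ => y + ε) (nhdsWithin 0 (Set.Ioi 0)) (nhds y) := by
      have h0 : Continuous (fun ε : ℝ => y + ε) := continuous_const.add continuous_id
      have := h0.tendsto (0:ℝ)
      simp only [add_zero] at this
      exact this.mono_left nhdsWithin_le_nhds
    exact (((h1.rpow_const (Or.inr hco1)).mul (h2.rpow_const (Or.inr hco2))).const_mul _)
  exact ge_of_tendsto htend (by filter_upwards [self_mem_nhdsWithin] with ε hε; exact key ε hε)

lemma helper_eps_rpow_limit {a c m q : ℝ} (hq : 0 ≤ q)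
    (h : ∀ ε > 0, a ≤ c * (m + ε) ^ q) : a ≤ c * m ^ q := by
  have htend : Filter.Tendsto (fun ε : ℝ => c * (m+ε) ^ q)
      (nhdsWithin 0 (Set.Ioi 0)) (nhds (c * m ^ q)) := by
    have h1 : Filter.Tendsto (fun ε : ℝ => m + ε) (nhdsWithin 0 (Set.Ioi 0)) (nhds m) := by
      have h0 : Continuous (fun ε : ℝ => m + ε) := continuous_const.add continuous_id
      have := h0.tendsto (0:ℝ)
      simp only [add_zero] at this
      exact this.mono_left nhdsWithin_le_nhds
    exact (h1.rpow_const (Or.inr hq)).const_mul c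
  exact ge_of_tendsto htend (by filter_upwards [self_mem_nhdsWithin] with ε hε; exact h ε hε)

lemma coe_nonneg' {u : Ω →ₘ[μ] ℝ} (hu : 0 ≤ u) : ∀ᵐ ω ∂μ, 0 ≤ u ω := by
  rw [← MeasureTheory.AEEqFun.coeFn_le] at hu
  filter_upwards [hu, MeasureTheory.AEEqFun.coeFn_zero (β := ℝ) (μ := μ)] with ω h1 h2
  rw [h2] at h1; exact h1

lemma nonneg_of_coe' {u : Ω →ₘ[μ] ℝ} (hu : ∀ᵐ ω ∂μ, 0 ≤ u ω) : 0 ≤ u := by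
  rw [← MeasureTheory.AEEqFun.coeFn_le]
  filter_upwards [hu, MeasureTheory.AEEqFun.coeFn_zero (β := ℝ) (μ := μ)] with ω h1 h2
  rw [h2]; exact h1

lemma le_of_coe' {u v : Ω →ₘ[μ] ℝ} (h : ∀ᵐ ω ∂μ, u ω ≤ v ω) : u ≤ v :=
  MeasureTheory.AEEqFun.coeFn_le.mp h

lemma coe_of_le' {u v : Ω →ₘ[μ] ℝ} (h : u ≤ v) : ∀ᵐ ω ∂μ, u ω ≤ v ω :=
  MeasureTheory.AEEqFun.coeFn_le.mpr h

lemma abs_le_iff_coe' {u v : Ω →ₘ[μ] ℝ} (h : ∀ᵐ ω ∂μ, |u ω| ≤ |v ω|) : |u| ≤ |v| := by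
  apply le_of_coe'
  filter_upwards [h, MeasureTheory.AEEqFun.coeFn_abs u, MeasureTheory.AEEqFun.coeFn_abs v] with ω h1 h2 h3
  rw [h2, h3]; exact h1

lemma abs_eq_self' {u : Ω →ₘ[μ] ℝ} (hu : 0 ≤ u) : |u| = u := by
  apply MeasureTheory.AEEqFun.ext
  filter_upwards [MeasureTheory.AEEqFun.coeFn_abs u, coe_nonneg' hu] with ω h1 h2
  rw [h1]; exact abs_of_nonneg h2

lemma absRpow_coe (p : ℝ) (f : Ω →ₘ[μ] ℝ) :
    (absRpow p f : Ω → ℝ) =ᵐ[μ] fun ω => |f ω| ^ p := MeasureTheory.AEEqFun.coeFn_mk _ _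

lemma absRpow_nonneg (p : ℝ) (f : Ω →ₘ[μ] ℝ) : 0 ≤ absRpow p f := by
  apply nonneg_of_coe'
  filter_upwards [absRpow_coe p f] with ω h
  rw [h]; exact Real.rpow_nonneg (abs_nonneg _) p

lemma absRpow_zero {p : ℝ} (hp : p ≠ 0) : absRpow p (0 : Ω →ₘ[μ] ℝ) = 0 := by
  apply MeasureTheory.AEEqFun.ext
  filter_upwards [absRpow_coe p (0 : Ω →ₘ[μ] ℝ),
    MeasureTheory.AEEqFun.coeFn_zero (β := ℝ) (μ := μ)] with ω h1 h2
  rw [h1, h2]; simp [Real.zero_rpow hp]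

lemma decompose_two {w a₀ a₁ : Ω →ₘ[μ] ℝ} (hw : |w| ≤ |a₀| + |a₁|) :
    ∃ w₀ w₁ : Ω →ₘ[μ] ℝ, w = w₀ + w₁ ∧ |w₀| ≤ |a₀| ∧ |w₁| ≤ |a₁| := by
  have hc : Continuous (fun q : ℝ × ℝ => clipSym q.1 |q.2|) := by
    unfold clipSym; fun_prop
  have hm : AEMeasurable (fun ω => clipSym (w ω) |a₀ ω|) μ :=
    hc.measurable.comp_aemeasurable (w.aemeasurable.prodMk a₀.aemeasurable)
  set w₀ : Ω →ₘ[μ] ℝ := MeasureTheory.AEEqFun.mk _ hm.aestronglyMeasurable with hw₀def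
  have hcoe : (w₀ : Ω → ℝ) =ᵐ[μ] fun ω => clipSym (w ω) |a₀ ω| :=
    MeasureTheory.AEEqFun.coeFn_mk _ _
  have hwpt : ∀ᵐ ω ∂μ, |w ω| ≤ |a₀ ω| + |a₁ ω| := by
    have := coe_of_le' hw
    filter_upwards [this, MeasureTheory.AEEqFun.coeFn_abs w,
      MeasureTheory.AEEqFun.coeFn_add |a₀| |a₁|, MeasureTheory.AEEqFun.coeFn_abs a₀,
      MeasureTheory.AEEqFun.coeFn_abs a₁] with ω h1 h2 h3 h4 h5
    rw [h2, h3] at h1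
    simpa [h4, h5] using h1
  refine ⟨w₀, w - w₀, by rw [add_sub_cancel], ?_, ?_⟩
  · apply abs_le_iff_coe'
    filter_upwards [hcoe] with ω h
    rw [h]
    exact clipSym_abs_le (abs_nonneg _)
  · apply abs_le_iff_coe'
    filter_upwards [hcoe, hwpt, MeasureTheory.AEEqFun.coeFn_sub w w₀] with ω h1 h2 h3
    rw [h3]
    show |w ω - w₀ ω| ≤ |a₁ ω|
    rw [h1]
    exact clipSym_sub_abs_le (abs_nonneg _) (abs_nonneg _) h2

section SumLemmas
variable {X₀ X₁ : BanachFunctionLattice Ω μ}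

lemma sumSet_mem_left {x : Ω →ₘ[μ] ℝ} (hx : x ∈ X₀.carrier) :
    x ∈ sumSet X₀.toFunctionSpace X₁.toFunctionSpace :=
  ⟨x, hx, 0, X₁.zero_mem, (add_zero x).symm⟩

lemma sumSet_mem_right {x : Ω →ₘ[μ] ℝ} (hx : x ∈ X₁.carrier) :
    x ∈ sumSet X₀.toFunctionSpace X₁.toFunctionSpace :=
  ⟨0, X₀.zero_mem, x, hx, (zero_add x).symm⟩

lemma sumSet_add {x y : Ω →ₘ[μ] ℝ} (hx : x ∈ sumSet X₀.toFunctionSpace X₁.toFunctionSpace)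
    (hy : y ∈ sumSet X₀.toFunctionSpace X₁.toFunctionSpace) :
    x + y ∈ sumSet X₀.toFunctionSpace X₁.toFunctionSpace := by
  obtain ⟨a₀, ha₀, a₁, ha₁, rfl⟩ := hx
  obtain ⟨b₀, hb₀, b₁, hb₁, rfl⟩ := hy
  exact ⟨a₀ + b₀, X₀.add_mem ha₀ hb₀, a₁ + b₁, X₁.add_mem ha₁ hb₁, by abel⟩

lemma sumSet_smul (c : ℝ) {x : Ω →ₘ[μ] ℝ}
    (hx : x ∈ sumSet X₀.toFunctionSpace X₁.toFunctionSpace) :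
    c • x ∈ sumSet X₀.toFunctionSpace X₁.toFunctionSpace := by
  obtain ⟨a₀, ha₀, a₁, ha₁, rfl⟩ := hx
  exact ⟨c • a₀, X₀.smul_mem c ha₀, c • a₁, X₁.smul_mem c ha₁, by rw [smul_add]⟩

lemma sumSet_ideal {x : Ω →ₘ[μ] ℝ} (hx : x ∈ sumSet X₀.toFunctionSpace X₁.toFunctionSpace)
    {w : Ω →ₘ[μ] ℝ} (hw : |w| ≤ |x|) :
    w ∈ sumSet X₀.toFunctionSpace X₁.toFunctionSpace := by
  obtain ⟨a₀, ha₀, a₁, ha₁, rfl⟩ := hx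
  have htri : |w| ≤ |a₀| + |a₁| := by
    refine le_trans hw (le_of_coe' ?_)
    filter_upwards [MeasureTheory.AEEqFun.coeFn_abs (a₀ + a₁),
      MeasureTheory.AEEqFun.coeFn_add a₀ a₁,
      MeasureTheory.AEEqFun.coeFn_add |a₀| |a₁|, MeasureTheory.AEEqFun.coeFn_abs a₀,
      MeasureTheory.AEEqFun.coeFn_abs a₁] with ω h1 h2 h3 h4 h5
    rw [h1, h2, h3]
    show |a₀ ω + a₁ ω| ≤ _
    rw [Pi.add_apply, h4, h5]
    exact abs_add_le _ _
  obtain ⟨w₀, w₁, hsum, h₀, h₁⟩ := decompose_two htri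
  exact ⟨w₀, X₀.ideal_mem a₀ ha₀ w₀ h₀, w₁, X₁.ideal_mem a₁ ha₁ w₁ h₁, hsum⟩

lemma sumSet_sub {x y : Ω →ₘ[μ] ℝ} (hx : x ∈ sumSet X₀.toFunctionSpace X₁.toFunctionSpace)
    (hy : y ∈ sumSet X₀.toFunctionSpace X₁.toFunctionSpace) :
    x - y ∈ sumSet X₀.toFunctionSpace X₁.toFunctionSpace := by
  have := sumSet_add hx (sumSet_smul (-1 : ℝ) hy)
  simpa [neg_one_smul, sub_eq_add_neg] using this

lemma sumSet_abs {x : Ω →ₘ[μ] ℝ} (hx : x ∈ sumSet X₀.toFunctionSpace X₁.toFunctionSpace) :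
    |x| ∈ sumSet X₀.toFunctionSpace X₁.toFunctionSpace := by
  apply sumSet_ideal hx
  apply abs_le_iff_coe'
  filter_upwards [MeasureTheory.AEEqFun.coeFn_abs x] with ω h
  rw [h, abs_abs]

end SumLemmas

noncomputable def sgn (x : ℝ) : ℝ := if x < 0 then -1 else if x = 0 then 0 else 1

lemma measurable_sgn : Measurable sgn := by
  unfold sgn
  refine Measurable.ite ?_ measurable_const (Measurable.ite ?_ measurable_const measurable_const)
  · exact measurableSet_lt measurable_id measurable_const
  · exact measurableSet_eq_fun measurable_id measurable_const

lemma sgn_mul_abs (x : ℝ) : sgn x * |x| = x := by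
  unfold sgn
  rcases lt_trichotomy x 0 with h | h | h
  · simp [h, abs_of_neg h]
  · simp [h]
  · rw [if_neg (by linarith), if_neg (by linarith), abs_of_pos h, one_mul]

lemma abs_sgn_le (x : ℝ) : |sgn x| ≤ 1 := by
  unfold sgn
  rcases lt_trichotomy x 0 with h | h | h
  · simp [h]
  · simp [h]
  · rw [if_neg (by linarith), if_neg (by linarith)]; simp

lemma sgn_zero : sgn 0 = 0 := by simp [sgn]

section DirLemmas
variable {X₀ X₁ : BanachFunctionLattice Ω μ}

lemma dir1 {p : ℝ} (hp : 1 < p) {a₀ a₁ : Ω →ₘ[μ] ℝ}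
    (h₀ : absRpow p a₀ ∈ X₀.carrier) (h₁ : absRpow p a₁ ∈ X₁.carrier) :
    ∃ b₀ b₁ : Ω →ₘ[μ] ℝ, b₀ ∈ X₀.carrier ∧ b₁ ∈ X₁.carrier ∧
      absRpow p (a₀ + a₁) = b₀ + b₁ ∧
      X₀.norm b₀ ≤ 2 ^ p * X₀.norm (absRpow p a₀) ∧
      X₁.norm b₁ ≤ 2 ^ p * X₁.norm (absRpow p a₁) := by
  have hp0 : (0:ℝ) ≤ p := by linarith
  have h2p : (0:ℝ) ≤ 2 ^ p := Real.rpow_nonneg (by norm_num) p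
  set u₀ : Ω →ₘ[μ] ℝ := (2 ^ p : ℝ) • absRpow p a₀ with hu₀
  set u₁ : Ω →ₘ[μ] ℝ := (2 ^ p : ℝ) • absRpow p a₁ with hu₁
  have hu₀mem : u₀ ∈ X₀.carrier := X₀.smul_mem _ h₀
  have hu₁mem : u₁ ∈ X₁.carrier := X₁.smul_mem _ h₁
  have key : |absRpow p (a₀ + a₁)| ≤ |u₀| + |u₁| := by
    apply le_of_coe'
    filter_upwards [MeasureTheory.AEEqFun.coeFn_abs (absRpow p (a₀ + a₁)),
      absRpow_coe p (a₀ + a₁), MeasureTheory.AEEqFun.coeFn_add a₀ a₁,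
      MeasureTheory.AEEqFun.coeFn_add |u₀| |u₁|,
      MeasureTheory.AEEqFun.coeFn_abs u₀, MeasureTheory.AEEqFun.coeFn_abs u₁,
      MeasureTheory.AEEqFun.coeFn_smul (2 ^ p : ℝ) (absRpow p a₀),
      MeasureTheory.AEEqFun.coeFn_smul (2 ^ p : ℝ) (absRpow p a₁),
      absRpow_coe p a₀, absRpow_coe p a₁] with ω e1 e2 e3 e4 e5 e6 e7 e8 e9 e10
    rw [e1, e2, e4, Pi.add_apply, e5, e6, e7, e8]
    simp only [Pi.smul_apply, smul_eq_mul]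
    rw [e9, e10, abs_of_nonneg (Real.rpow_nonneg (abs_nonneg _) p)]
    rw [abs_of_nonneg (mul_nonneg h2p (Real.rpow_nonneg (abs_nonneg _) p)),
      abs_of_nonneg (mul_nonneg h2p (Real.rpow_nonneg (abs_nonneg _) p))]
    have hstep : |(a₀ + a₁ : Ω →ₘ[μ] ℝ) ω| ^ p ≤ (|a₀ ω| + |a₁ ω|) ^ p := by
      apply Real.rpow_le_rpow (abs_nonneg _) _ hp0
      rw [e3]; exact abs_add_le _ _
    calc |(a₀ + a₁ : Ω →ₘ[μ] ℝ) ω| ^ p ≤ (|a₀ ω| + |a₁ ω|) ^ p := hstep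
      _ ≤ 2 ^ p * (|a₀ ω| ^ p + |a₁ ω| ^ p) :=
          helper_rpow_add_le hp0 (abs_nonneg _) (abs_nonneg _)
      _ = 2 ^ p * |a₀ ω| ^ p + 2 ^ p * |a₁ ω| ^ p := by ring
  obtain ⟨w₀, w₁, hsum, hle₀, hle₁⟩ := decompose_two key
  refine ⟨w₀, w₁, X₀.ideal_mem u₀ hu₀mem w₀ hle₀, X₁.ideal_mem u₁ hu₁mem w₁ hle₁, hsum, ?_, ?_⟩
  · calc X₀.norm w₀ ≤ X₀.norm u₀ := X₀.ideal_norm_le u₀ hu₀mem w₀ hle₀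
      _ = 2 ^ p * X₀.norm (absRpow p a₀) := by
          rw [hu₀, X₀.norm_smul _ _ h₀, abs_of_nonneg h2p]
  · calc X₁.norm w₁ ≤ X₁.norm u₁ := X₁.ideal_norm_le u₁ hu₁mem w₁ hle₁
      _ = 2 ^ p * X₁.norm (absRpow p a₁) := by
          rw [hu₁, X₁.norm_smul _ _ h₁, abs_of_nonneg h2p]

lemma dir2 {p : ℝ} (hp : 1 < p) {f b₀ b₁ : Ω →ₘ[μ] ℝ}
    (hb₀ : b₀ ∈ X₀.carrier) (hb₁ : b₁ ∈ X₁.carrier)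
    (hF : absRpow p f = b₀ + b₁) :
    ∃ a₀ a₁ : Ω →ₘ[μ] ℝ, f = a₀ + a₁ ∧ absRpow p a₀ ∈ X₀.carrier ∧
      absRpow p a₁ ∈ X₁.carrier ∧
      X₀.norm (absRpow p a₀) ≤ X₀.norm b₀ ∧ X₁.norm (absRpow p a₁) ≤ X₁.norm b₁ := by
  have hp0 : (0:ℝ) < p := by linarith
  have hm : AEMeasurable (fun ω => sgn (f ω) * (clipPos (b₀ ω) (|f ω| ^ p)) ^ (1/p)) μ := by
    have h1 : AEMeasurable (fun ω => sgn (f ω)) μ :=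
      measurable_sgn.comp_aemeasurable f.aemeasurable
    have h2 : Measurable (fun q : ℝ × ℝ => (clipPos q.1 (|q.2| ^ p)) ^ (1/p)) := by
      unfold clipPos
      measurability
    exact h1.mul (h2.comp_aemeasurable (b₀.aemeasurable.prodMk f.aemeasurable))
  set a₀ : Ω →ₘ[μ] ℝ := MeasureTheory.AEEqFun.mk _ hm.aestronglyMeasurable with ha₀def
  have hcoe : (a₀ : Ω → ℝ) =ᵐ[μ] fun ω => sgn (f ω) * (clipPos (b₀ ω) (|f ω| ^ p)) ^ (1/p) :=
    MeasureTheory.AEEqFun.coeFn_mk _ _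
  have hFpt : ∀ᵐ ω ∂μ, |f ω| ^ p = b₀ ω + b₁ ω := by
    have h1 : (absRpow p f : Ω → ℝ) =ᵐ[μ] ↑b₀ + ↑b₁ := by
      rw [hF]; exact MeasureTheory.AEEqFun.coeFn_add b₀ b₁
    filter_upwards [absRpow_coe p f, h1] with ω e1 e2
    rw [← e1, e2, Pi.add_apply]
  -- pointwise bound for a₀
  have hbd₀ : ∀ᵐ ω ∂μ, |a₀ ω| ^ p ≤ |b₀ ω| := by
    filter_upwards [hcoe] with ω e1
    rw [e1]
    have hc0 : (0:ℝ) ≤ clipPos (b₀ ω) (|f ω| ^ p) := clipPos_nonneg _ _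
    have h1 : |sgn (f ω) * (clipPos (b₀ ω) (|f ω| ^ p)) ^ (1/p)| ≤
        (clipPos (b₀ ω) (|f ω| ^ p)) ^ (1/p) := by
      rw [abs_mul, abs_of_nonneg (Real.rpow_nonneg hc0 _)]
      exact mul_le_of_le_one_left (Real.rpow_nonneg hc0 _) (abs_sgn_le _)
    calc |sgn (f ω) * (clipPos (b₀ ω) (|f ω| ^ p)) ^ (1/p)| ^ p
        ≤ ((clipPos (b₀ ω) (|f ω| ^ p)) ^ (1/p)) ^ p :=
          Real.rpow_le_rpow (abs_nonneg _) h1 hp0.le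
      _ = clipPos (b₀ ω) (|f ω| ^ p) := by
          rw [← Real.rpow_mul hc0, one_div, inv_mul_cancel₀ hp0.ne', Real.rpow_one]
      _ ≤ |b₀ ω| := clipPos_abs_le
  -- pointwise bound for a₁ := f - a₀
  have hbd₁ : ∀ᵐ ω ∂μ, |f ω - a₀ ω| ^ p ≤ |b₁ ω| := by
    filter_upwards [hcoe, hFpt] with ω e1 e2
    rw [e1]
    set m : ℝ := |f ω| ^ p with hmdef
    have hm0 : 0 ≤ m := Real.rpow_nonneg (abs_nonneg _) p
    set c : ℝ := clipPos (b₀ ω) m with hcdef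
    have hc0 : 0 ≤ c := clipPos_nonneg _ _
    have hcm : c ≤ m := clipPos_le_self hm0
    have habs : |f ω| = m ^ (1/p) := by
      rw [hmdef, ← Real.rpow_mul (abs_nonneg _), mul_one_div, div_self hp0.ne',
        Real.rpow_one]
    have hfeq : f ω = sgn (f ω) * m ^ (1/p) := by rw [← habs, sgn_mul_abs]
    have hdiff : f ω - sgn (f ω) * c ^ (1/p) = sgn (f ω) * (m ^ (1/p) - c ^ (1/p)) := by
      rw [mul_sub, ← hfeq]
    have hmc : 0 ≤ m ^ (1/p) - c ^ (1/p) :=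
      sub_nonneg.mpr (Real.rpow_le_rpow hc0 hcm (by positivity))
    have h3 : |f ω - sgn (f ω) * c ^ (1/p)| ≤ m ^ (1/p) - c ^ (1/p) := by
      rw [hdiff, abs_mul, abs_of_nonneg hmc]
      exact mul_le_of_le_one_left hmc (abs_sgn_le _)
    have h1p : (1:ℝ)/p ≤ 1 := by rw [div_le_one hp0]; linarith
    have hsub : m ^ (1/p) - c ^ (1/p) ≤ (m - c) ^ (1/p) := by
      have := helper_rpow_subadd (r := 1/p) (by positivity) h1p hc0
        (by linarith : (0:ℝ) ≤ m - c)
      have e : c + (m - c) = m := by ring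
      rw [e] at this
      linarith
    have hd : m - c ≤ |b₁ ω| := by
      have := clipPos_sub_le (x := b₀ ω) hm0
      have e : m - b₀ ω = b₁ ω := by rw [e2] at hmdef; linarith [hmdef]
      calc m - c ≤ |m - b₀ ω| := this
        _ = |b₁ ω| := by rw [e]
    calc |f ω - sgn (f ω) * c ^ (1/p)| ^ p
        ≤ ((m - c) ^ (1/p)) ^ p :=
          Real.rpow_le_rpow (abs_nonneg _) (le_trans h3 hsub) hp0.le
      _ = m - c := by
          rw [← Real.rpow_mul (by linarith : (0:ℝ) ≤ m - c), one_div,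
            inv_mul_cancel₀ hp0.ne', Real.rpow_one]
      _ ≤ |b₁ ω| := hd
  have habs₀ : |absRpow p a₀| ≤ |b₀| := by
    apply abs_le_iff_coe'
    filter_upwards [absRpow_coe p a₀, hbd₀] with ω e1 e2
    rw [e1, abs_of_nonneg (Real.rpow_nonneg (abs_nonneg _) p)]
    exact e2
  have habs₁ : |absRpow p (f - a₀)| ≤ |b₁| := by
    apply abs_le_iff_coe'
    filter_upwards [absRpow_coe p (f - a₀), MeasureTheory.AEEqFun.coeFn_sub f a₀,
      hbd₁] with ω e1 e2 e3
    rw [e1, abs_of_nonneg (Real.rpow_nonneg (abs_nonneg _) p)]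
    have : (f - a₀ : Ω →ₘ[μ] ℝ) ω = f ω - a₀ ω := by rw [e2]; rfl
    rw [this]
    exact e3
  exact ⟨a₀, f - a₀, by rw [add_sub_cancel],
    X₀.ideal_mem b₀ hb₀ _ habs₀, X₁.ideal_mem b₁ hb₁ _ habs₁,
    X₀.ideal_norm_le b₀ hb₀ _ habs₀, X₁.ideal_norm_le b₁ hb₁ _ habs₁⟩

end DirLemmas

section Kmachinery
variable {X₀ X₁ : BanachFunctionLattice Ω μ}

lemma toFS_carrier (X : BanachFunctionLattice Ω μ) : X.toFunctionSpace.carrier = X.carrier := rfl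
lemma toFS_norm (X : BanachFunctionLattice Ω μ) : X.toFunctionSpace.norm = X.norm := rfl
lemma pConv_carrier_mem (X : BanachFunctionLattice Ω μ) (p : ℝ) (f : Ω →ₘ[μ] ℝ) :
    f ∈ (pConv X p).carrier ↔ absRpow p f ∈ X.carrier := Iff.rfl
lemma pConv_norm_eq (X : BanachFunctionLattice Ω μ) (p : ℝ) (f : Ω →ₘ[μ] ℝ) :
    (pConv X p).norm f = (X.norm (absRpow p f)) ^ (1/p) := rfl

/-- The auxiliary K-type functional measured with base-space norms of p-th powers. -/
noncomputable def KpAux (X₀ X₁ : BanachFunctionLattice Ω μ) (p t : ℝ) (f : Ω →ₘ[μ] ℝ) : ℝ :=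
  sInf {r | ∃ a₀, absRpow p a₀ ∈ X₀.carrier ∧ ∃ a₁, absRpow p a₁ ∈ X₁.carrier ∧
    f = a₀ + a₁ ∧ r = X₀.norm (absRpow p a₀) + t * X₁.norm (absRpow p a₁)}

lemma le_mul_csInf {K c : ℝ} {S : Set ℝ} (hc : 0 < c) (hS : S.Nonempty)
    (h : ∀ r ∈ S, K ≤ c * r) : K ≤ c * sInf S := by
  have h2 : K / c ≤ sInf S := le_csInf hS fun r hr => by
    rw [div_le_iff₀ hc, mul_comm]; exact h r hr
  calc K = (K / c) * c := by field_simp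
    _ ≤ sInf S * c := mul_le_mul_of_nonneg_right h2 hc.le
    _ = c * sInf S := mul_comm _ _

-- basic facts about the base K set
lemma Kbase_elt_nonneg {t : ℝ} (ht : 0 ≤ t) {F r : Ω →ₘ[μ] ℝ} {x : ℝ}
    (hx : x ∈ {r | ∃ a₀ ∈ X₀.toFunctionSpace.carrier, ∃ a₁ ∈ X₁.toFunctionSpace.carrier,
      F = a₀ + a₁ ∧ r = X₀.toFunctionSpace.norm a₀ + t * X₁.toFunctionSpace.norm a₁}) :
    0 ≤ x := by
  obtain ⟨a₀, h₀, a₁, h₁, _, hr⟩ := hx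
  rw [hr]
  have := X₀.norm_nonneg a₀ h₀
  have := X₁.norm_nonneg a₁ h₁
  positivity

lemma Kbase_bdd {t : ℝ} (ht : 0 ≤ t) (F : Ω →ₘ[μ] ℝ) :
    BddBelow {r | ∃ a₀ ∈ X₀.toFunctionSpace.carrier, ∃ a₁ ∈ X₁.toFunctionSpace.carrier,
      F = a₀ + a₁ ∧ r = X₀.toFunctionSpace.norm a₀ + t * X₁.toFunctionSpace.norm a₁} :=
  ⟨0, fun x hx => Kbase_elt_nonneg ht (r := F) hx⟩

lemma Kbase_nonneg {t : ℝ} (ht : 0 ≤ t) (F : Ω →ₘ[μ] ℝ) :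
    0 ≤ Kfun X₀.toFunctionSpace X₁.toFunctionSpace t F :=
  Real.sInf_nonneg fun x hx => Kbase_elt_nonneg ht (r := F) hx

-- facts about the pConv K set
lemma KP_elt_nonneg {p t : ℝ} (ht : 0 ≤ t) {f : Ω →ₘ[μ] ℝ} {x : ℝ}
    (hx : x ∈ {r | ∃ a₀ ∈ (pConv X₀ p).carrier, ∃ a₁ ∈ (pConv X₁ p).carrier,
      f = a₀ + a₁ ∧ r = (pConv X₀ p).norm a₀ + t * (pConv X₁ p).norm a₁}) :
    0 ≤ x := by
  obtain ⟨a₀, h₀, a₁, h₁, _, hr⟩ := hx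
  rw [hr, pConv_norm_eq, pConv_norm_eq]
  have h2 := Real.rpow_nonneg (X₀.norm_nonneg _ h₀) (1/p)
  have h3 := Real.rpow_nonneg (X₁.norm_nonneg _ h₁) (1/p)
  positivity

lemma KP_bdd {p t : ℝ} (ht : 0 ≤ t) (f : Ω →ₘ[μ] ℝ) :
    BddBelow {r | ∃ a₀ ∈ (pConv X₀ p).carrier, ∃ a₁ ∈ (pConv X₁ p).carrier,
      f = a₀ + a₁ ∧ r = (pConv X₀ p).norm a₀ + t * (pConv X₁ p).norm a₁} :=
  ⟨0, fun x hx => KP_elt_nonneg (X₀ := X₀) (X₁ := X₁) ht hx⟩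

lemma KP_nonneg {p t : ℝ} (ht : 0 ≤ t) (f : Ω →ₘ[μ] ℝ) :
    0 ≤ Kfun (pConv X₀ p) (pConv X₁ p) t f :=
  Real.sInf_nonneg fun x hx => KP_elt_nonneg (X₀ := X₀) (X₁ := X₁) ht hx

-- facts about the KpAux set
lemma Kp_elt_nonneg {p t : ℝ} (ht : 0 ≤ t) {f : Ω →ₘ[μ] ℝ} {x : ℝ}
    (hx : x ∈ {r | ∃ a₀, absRpow p a₀ ∈ X₀.carrier ∧ ∃ a₁, absRpow p a₁ ∈ X₁.carrier ∧
      f = a₀ + a₁ ∧ r = X₀.norm (absRpow p a₀) + t * X₁.norm (absRpow p a₁)}) :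
    0 ≤ x := by
  obtain ⟨a₀, h₀, a₁, h₁, _, hr⟩ := hx
  rw [hr]
  have := X₀.norm_nonneg _ h₀
  have := X₁.norm_nonneg _ h₁
  positivity

lemma Kp_bdd {p t : ℝ} (ht : 0 ≤ t) (f : Ω →ₘ[μ] ℝ) :
    BddBelow {r | ∃ a₀, absRpow p a₀ ∈ X₀.carrier ∧ ∃ a₁, absRpow p a₁ ∈ X₁.carrier ∧
      f = a₀ + a₁ ∧ r = X₀.norm (absRpow p a₀) + t * X₁.norm (absRpow p a₁)} :=
  ⟨0, fun x hx => Kp_elt_nonneg (X₀ := X₀) (X₁ := X₁) ht hx⟩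

lemma Kp_nonneg {p t : ℝ} (ht : 0 ≤ t) (f : Ω →ₘ[μ] ℝ) :
    0 ≤ KpAux X₀ X₁ p t f :=
  Real.sInf_nonneg fun x hx => Kp_elt_nonneg (X₀ := X₀) (X₁ := X₁) ht hx

lemma Kp_set_nonempty {p t : ℝ} {f : Ω →ₘ[μ] ℝ}
    (hf : f ∈ sumSet (pConv X₀ p) (pConv X₁ p)) :
    Set.Nonempty {r | ∃ a₀, absRpow p a₀ ∈ X₀.carrier ∧ ∃ a₁, absRpow p a₁ ∈ X₁.carrier ∧
      f = a₀ + a₁ ∧ r = X₀.norm (absRpow p a₀) + t * X₁.norm (absRpow p a₁)} := by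
  obtain ⟨a₀, h₀, a₁, h₁, heq⟩ := hf
  exact ⟨_, a₀, h₀, a₁, h₁, heq, rfl⟩

-- (a)
lemma chain_a {p t : ℝ} (hp : 1 < p) (ht : 0 < t) {f : Ω →ₘ[μ] ℝ}
    (hf : f ∈ sumSet (pConv X₀ p) (pConv X₁ p)) :
    Kfun X₀.toFunctionSpace X₁.toFunctionSpace t (absRpow p f) ≤
      2 ^ p * KpAux X₀ X₁ p t f := by
  apply le_mul_csInf (Real.rpow_pos_of_pos (by norm_num) p) (Kp_set_nonempty hf)
  rintro r ⟨a₀, h₀, a₁, h₁, rfl, hr⟩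
  obtain ⟨b₀, b₁, hb₀, hb₁, hsum, hn₀, hn₁⟩ := dir1 hp h₀ h₁
  have hmem : X₀.toFunctionSpace.norm b₀ + t * X₁.toFunctionSpace.norm b₁ ∈
      {r | ∃ c₀ ∈ X₀.toFunctionSpace.carrier, ∃ c₁ ∈ X₁.toFunctionSpace.carrier,
        absRpow p (a₀ + a₁) = c₀ + c₁ ∧
        r = X₀.toFunctionSpace.norm c₀ + t * X₁.toFunctionSpace.norm c₁} :=
    ⟨b₀, hb₀, b₁, hb₁, hsum, rfl⟩
  calc Kfun X₀.toFunctionSpace X₁.toFunctionSpace t (absRpow p (a₀ + a₁))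
      ≤ X₀.norm b₀ + t * X₁.norm b₁ := csInf_le (Kbase_bdd ht.le _) hmem
    _ ≤ 2 ^ p * X₀.norm (absRpow p a₀) + t * (2 ^ p * X₁.norm (absRpow p a₁)) := by
        have := mul_le_mul_of_nonneg_left hn₁ ht.le
        linarith
    _ = 2 ^ p * r := by rw [hr]; ring

-- (d)
lemma chain_d {p t : ℝ} (hp : 1 < p) (ht : 0 < t) {f : Ω →ₘ[μ] ℝ}
    (hf : f ∈ sumSet (pConv X₀ p) (pConv X₁ p)) :
    KpAux X₀ X₁ p t f ≤ Kfun X₀.toFunctionSpace X₁.toFunctionSpace t (absRpow p f) := by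
  have hne : Set.Nonempty {r | ∃ a₀ ∈ X₀.toFunctionSpace.carrier,
      ∃ a₁ ∈ X₁.toFunctionSpace.carrier, absRpow p f = a₀ + a₁ ∧
      r = X₀.toFunctionSpace.norm a₀ + t * X₁.toFunctionSpace.norm a₁} := by
    obtain ⟨a₀, h₀, a₁, h₁, rfl⟩ := hf
    obtain ⟨b₀, b₁, hb₀, hb₁, hsum, _, _⟩ := dir1 hp h₀ h₁
    exact ⟨_, b₀, hb₀, b₁, hb₁, hsum, rfl⟩
  apply le_csInf hne
  rintro r ⟨b₀, hb₀, b₁, hb₁, hFeq, hr⟩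
  obtain ⟨a₀, a₁, hsum, h₀, h₁, hn₀, hn₁⟩ := dir2 hp hb₀ hb₁ hFeq
  have hmem : X₀.norm (absRpow p a₀) + t * X₁.norm (absRpow p a₁) ∈
      {r | ∃ c₀, absRpow p c₀ ∈ X₀.carrier ∧ ∃ c₁, absRpow p c₁ ∈ X₁.carrier ∧
        f = c₀ + c₁ ∧ r = X₀.norm (absRpow p c₀) + t * X₁.norm (absRpow p c₁)} :=
    ⟨a₀, h₀, a₁, h₁, hsum, rfl⟩
  calc KpAux X₀ X₁ p t f ≤ X₀.norm (absRpow p a₀) + t * X₁.norm (absRpow p a₁) :=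
        csInf_le (Kp_bdd ht.le f) hmem
    _ ≤ r := by
        simp only [toFS_norm] at hr
        rw [hr]
        have := mul_le_mul_of_nonneg_left hn₁ ht.le
        linarith

-- (c)
lemma chain_c {p t : ℝ} (hp : 1 < p) (ht : 0 < t) {f : Ω →ₘ[μ] ℝ}
    (hf : f ∈ sumSet (pConv X₀ p) (pConv X₁ p)) :
    Kfun (pConv X₀ p) (pConv X₁ p) (t ^ (1/p)) f ≤ 2 * (KpAux X₀ X₁ p t f) ^ (1/p) := by
  have hp0 : (0:ℝ) < p := by linarith
  apply helper_eps_rpow_limit (by positivity : (0:ℝ) ≤ 1/p)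
  intro ε hε
  have hlt : KpAux X₀ X₁ p t f < KpAux X₀ X₁ p t f + ε := by linarith
  obtain ⟨r, hrmem, hrlt⟩ := exists_lt_of_csInf_lt (Kp_set_nonempty hf) hlt
  have hr0 : 0 ≤ r := Kp_elt_nonneg (X₀ := X₀) (X₁ := X₁) ht.le hrmem
  obtain ⟨a₀, h₀, a₁, h₁, hsum, hrval⟩ := hrmem
  have hn₀ : 0 ≤ X₀.norm (absRpow p a₀) := X₀.norm_nonneg _ h₀
  have hn₁ : 0 ≤ X₁.norm (absRpow p a₁) := X₁.norm_nonneg _ h₁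
  have hmem : (pConv X₀ p).norm a₀ + t ^ (1/p) * (pConv X₁ p).norm a₁ ∈
      {r | ∃ c₀ ∈ (pConv X₀ p).carrier, ∃ c₁ ∈ (pConv X₁ p).carrier,
        f = c₀ + c₁ ∧ r = (pConv X₀ p).norm c₀ + t ^ (1/p) * (pConv X₁ p).norm c₁} :=
    ⟨a₀, h₀, a₁, h₁, hsum, rfl⟩
  have step : (pConv X₀ p).norm a₀ + t ^ (1/p) * (pConv X₁ p).norm a₁ ≤ 2 * r ^ (1/p) := by
    rw [pConv_norm_eq, pConv_norm_eq]
    have e1 : X₀.norm (absRpow p a₀) ^ (1/p) ≤ r ^ (1/p) := by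
      apply Real.rpow_le_rpow hn₀ _ (by positivity)
      rw [hrval]; nlinarith
    have e2 : t ^ (1/p) * X₁.norm (absRpow p a₁) ^ (1/p) ≤ r ^ (1/p) := by
      rw [← Real.mul_rpow ht.le hn₁]
      apply Real.rpow_le_rpow (by positivity) _ (by positivity)
      rw [hrval]; nlinarith
    linarith
  calc Kfun (pConv X₀ p) (pConv X₁ p) (t ^ (1/p)) f
      ≤ (pConv X₀ p).norm a₀ + t ^ (1/p) * (pConv X₁ p).norm a₁ :=
        csInf_le (KP_bdd (by positivity) f) hmem
    _ ≤ 2 * r ^ (1/p) := step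
    _ ≤ 2 * (KpAux X₀ X₁ p t f + ε) ^ (1/p) := by
        apply mul_le_mul_of_nonneg_left _ (by norm_num)
        exact Real.rpow_le_rpow hr0 hrlt.le (by positivity)

-- (b)
lemma chain_b {p t : ℝ} (hp : 1 < p) (ht : 0 < t) {f : Ω →ₘ[μ] ℝ}
    (hf : f ∈ sumSet (pConv X₀ p) (pConv X₁ p)) :
    KpAux X₀ X₁ p t f ≤ 2 * (Kfun (pConv X₀ p) (pConv X₁ p) (t ^ (1/p)) f) ^ p := by
  have hp0 : (0:ℝ) < p := by linarith
  apply helper_eps_rpow_limit (le_of_lt hp0)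
  intro ε hε
  have hne : Set.Nonempty {r | ∃ c₀ ∈ (pConv X₀ p).carrier, ∃ c₁ ∈ (pConv X₁ p).carrier,
      f = c₀ + c₁ ∧ r = (pConv X₀ p).norm c₀ + t ^ (1/p) * (pConv X₁ p).norm c₁} := by
    obtain ⟨a₀, h₀, a₁, h₁, heq⟩ := hf
    exact ⟨_, a₀, h₀, a₁, h₁, heq, rfl⟩
  have hlt : Kfun (pConv X₀ p) (pConv X₁ p) (t ^ (1/p)) f <
      Kfun (pConv X₀ p) (pConv X₁ p) (t ^ (1/p)) f + ε := by linarith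
  obtain ⟨y, hymem, hylt⟩ := exists_lt_of_csInf_lt hne hlt
  have hy0 : 0 ≤ y := KP_elt_nonneg (X₀ := X₀) (X₁ := X₁) (by positivity) hymem
  obtain ⟨a₀, h₀, a₁, h₁, hsum, hyval⟩ := hymem
  have hn₀ : 0 ≤ X₀.norm (absRpow p a₀) := X₀.norm_nonneg _ h₀
  have hn₁ : 0 ≤ X₁.norm (absRpow p a₁) := X₁.norm_nonneg _ h₁
  have hmem : X₀.norm (absRpow p a₀) + t * X₁.norm (absRpow p a₁) ∈
      {r | ∃ c₀, absRpow p c₀ ∈ X₀.carrier ∧ ∃ c₁, absRpow p c₁ ∈ X₁.carrier ∧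
        f = c₀ + c₁ ∧ r = X₀.norm (absRpow p c₀) + t * X₁.norm (absRpow p c₁)} :=
    ⟨a₀, h₀, a₁, h₁, hsum, rfl⟩
  have step : X₀.norm (absRpow p a₀) + t * X₁.norm (absRpow p a₁) ≤ 2 * y ^ p := by
    have hyv : y = X₀.norm (absRpow p a₀) ^ (1/p) + t ^ (1/p) * X₁.norm (absRpow p a₁) ^ (1/p) := by
      rw [hyval, pConv_norm_eq, pConv_norm_eq]
    have e1 : X₀.norm (absRpow p a₀) ≤ y ^ p := by
      have : X₀.norm (absRpow p a₀) = (X₀.norm (absRpow p a₀) ^ (1/p)) ^ p := by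
        rw [← Real.rpow_mul hn₀, one_div, inv_mul_cancel₀ hp0.ne', Real.rpow_one]
      rw [this]
      apply Real.rpow_le_rpow (Real.rpow_nonneg hn₀ _) _ hp0.le
      rw [hyv]
      have : 0 ≤ t ^ (1/p) * X₁.norm (absRpow p a₁) ^ (1/p) := by positivity
      linarith
    have e2 : t * X₁.norm (absRpow p a₁) ≤ y ^ p := by
      have heq2 : t * X₁.norm (absRpow p a₁) =
          (t ^ (1/p) * X₁.norm (absRpow p a₁) ^ (1/p)) ^ p := by
        rw [Real.mul_rpow (Real.rpow_nonneg ht.le _) (Real.rpow_nonneg hn₁ _),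
          ← Real.rpow_mul ht.le, ← Real.rpow_mul hn₁, one_div,
          inv_mul_cancel₀ hp0.ne', Real.rpow_one, Real.rpow_one]
      rw [heq2]
      apply Real.rpow_le_rpow (by positivity) _ hp0.le
      rw [hyv]
      have : 0 ≤ X₀.norm (absRpow p a₀) ^ (1/p) := by positivity
      linarith
    linarith
  calc KpAux X₀ X₁ p t f ≤ X₀.norm (absRpow p a₀) + t * X₁.norm (absRpow p a₁) :=
        csInf_le (Kp_bdd ht.le f) hmem
    _ ≤ 2 * y ^ p := step
    _ ≤ 2 * (Kfun (pConv X₀ p) (pConv X₁ p) (t ^ (1/p)) f + ε) ^ p := by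
        apply mul_le_mul_of_nonneg_left _ (by norm_num)
        exact Real.rpow_le_rpow hy0 hylt.le hp0.le

-- homogeneity lower bound
lemma K_smul_ge {t c : ℝ} (ht : 0 ≤ t) (hc : 0 < c) {F : Ω →ₘ[μ] ℝ}
    (hF : F ∈ sumSet X₀.toFunctionSpace X₁.toFunctionSpace) :
    c * Kfun X₀.toFunctionSpace X₁.toFunctionSpace t F ≤
      Kfun X₀.toFunctionSpace X₁.toFunctionSpace t (c • F) := by
  have hne : Set.Nonempty {r | ∃ a₀ ∈ X₀.toFunctionSpace.carrier,
      ∃ a₁ ∈ X₁.toFunctionSpace.carrier, c • F = a₀ + a₁ ∧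
      r = X₀.toFunctionSpace.norm a₀ + t * X₁.toFunctionSpace.norm a₁} := by
    obtain ⟨a₀, h₀, a₁, h₁, rfl⟩ := hF
    exact ⟨_, c • a₀, X₀.smul_mem c h₀, c • a₁, X₁.smul_mem c h₁, by rw [smul_add], rfl⟩
  apply le_csInf hne
  rintro r ⟨b₀, hb₀, b₁, hb₁, heq, hr⟩
  have hFeq : F = c⁻¹ • b₀ + c⁻¹ • b₁ := by
    have : c⁻¹ • (c • F) = c⁻¹ • (b₀ + b₁) := by rw [heq]
    rwa [smul_smul, inv_mul_cancel₀ hc.ne', one_smul, smul_add] at this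
  have hmem : X₀.norm (c⁻¹ • b₀) + t * X₁.norm (c⁻¹ • b₁) ∈
      {r | ∃ a₀ ∈ X₀.toFunctionSpace.carrier, ∃ a₁ ∈ X₁.toFunctionSpace.carrier,
        F = a₀ + a₁ ∧ r = X₀.toFunctionSpace.norm a₀ + t * X₁.toFunctionSpace.norm a₁} :=
    ⟨c⁻¹ • b₀, X₀.smul_mem _ hb₀, c⁻¹ • b₁, X₁.smul_mem _ hb₁, hFeq, rfl⟩
  have hval : X₀.norm (c⁻¹ • b₀) + t * X₁.norm (c⁻¹ • b₁) = c⁻¹ * r := by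
    rw [X₀.norm_smul _ _ hb₀, X₁.norm_smul _ _ hb₁, abs_of_nonneg (by positivity : (0:ℝ) ≤ c⁻¹), hr]
    rw [toFS_norm, toFS_norm]
    ring
  have hK := csInf_le (Kbase_bdd (X₀ := X₀) (X₁ := X₁) ht F) hmem
  rw [hval] at hK
  calc c * Kfun X₀.toFunctionSpace X₁.toFunctionSpace t F ≤ c * (c⁻¹ * r) :=
        mul_le_mul_of_nonneg_left hK hc.le
    _ = r := by field_simp

end Kmachinery

section OperatorLemmas
variable {X₀ X₁ : BanachFunctionLattice Ω μ}

lemma mul_add' (u x y : Ω →ₘ[μ] ℝ) : u * (x + y) = u * x + u * y := by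
  apply MeasureTheory.AEEqFun.ext
  filter_upwards [MeasureTheory.AEEqFun.coeFn_mul u (x + y),
    MeasureTheory.AEEqFun.coeFn_add x y, MeasureTheory.AEEqFun.coeFn_add (u * x) (u * y),
    MeasureTheory.AEEqFun.coeFn_mul u x, MeasureTheory.AEEqFun.coeFn_mul u y] with ω e1 e2 e3 e4 e5
  rw [e1, e3, Pi.add_apply, e4, e5, Pi.mul_apply]
  show u ω * (x + y : Ω →ₘ[μ] ℝ) ω = _
  rw [e2, Pi.add_apply]
  simp only [Pi.mul_apply]
  ring

lemma mul_smul' (a : ℝ) (u x : Ω →ₘ[μ] ℝ) : u * (a • x) = a • (u * x) := by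
  apply MeasureTheory.AEEqFun.ext
  filter_upwards [MeasureTheory.AEEqFun.coeFn_mul u (a • x),
    MeasureTheory.AEEqFun.coeFn_smul a x, MeasureTheory.AEEqFun.coeFn_smul a (u * x),
    MeasureTheory.AEEqFun.coeFn_mul u x] with ω e1 e2 e3 e4
  rw [e1, e3, Pi.smul_apply, e4, Pi.mul_apply]
  show u ω * (a • x : Ω →ₘ[μ] ℝ) ω = _
  rw [e2, Pi.smul_apply]
  simp only [smul_eq_mul, Pi.mul_apply]
  ring

lemma S_mono (S : (Ω →ₘ[μ] ℝ) → (Ω →ₘ[μ] ℝ))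
    (hadd : ∀ x ∈ sumSet X₀.toFunctionSpace X₁.toFunctionSpace,
      ∀ y ∈ sumSet X₀.toFunctionSpace X₁.toFunctionSpace, S (x + y) = S x + S y)
    (hpos : IsPositiveOn X₀.toFunctionSpace X₁.toFunctionSpace S)
    {x y : Ω →ₘ[μ] ℝ} (hx : x ∈ sumSet X₀.toFunctionSpace X₁.toFunctionSpace)
    (hy : y ∈ sumSet X₀.toFunctionSpace X₁.toFunctionSpace) (hxy : x ≤ y) : S x ≤ S y := by
  have hyx : y - x ∈ sumSet X₀.toFunctionSpace X₁.toFunctionSpace := sumSet_sub hy hx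
  have hd : (0 : Ω →ₘ[μ] ℝ) ≤ y - x := by
    apply nonneg_of_coe'
    filter_upwards [coe_of_le' hxy, MeasureTheory.AEEqFun.coeFn_sub y x] with ω e1 e2
    rw [e2, Pi.sub_apply]; linarith
  have h1 : S y = S (y - x) + S x := by
    rw [← hadd (y - x) hyx x hx, sub_add_cancel]
  apply le_of_coe'
  have h2 : (S y : Ω → ℝ) =ᵐ[μ] ↑(S (y - x)) + ↑(S x) := by
    rw [h1]; exact MeasureTheory.AEEqFun.coeFn_add _ _
  filter_upwards [h2, coe_nonneg' (hpos _ hyx hd)] with ω e1 e2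
  rw [e1, Pi.add_apply]; linarith

lemma S_abs_le (S : (Ω →ₘ[μ] ℝ) → (Ω →ₘ[μ] ℝ))
    (hadd : ∀ x ∈ sumSet X₀.toFunctionSpace X₁.toFunctionSpace,
      ∀ y ∈ sumSet X₀.toFunctionSpace X₁.toFunctionSpace, S (x + y) = S x + S y)
    (hsmul : ∀ (c : ℝ), ∀ x ∈ sumSet X₀.toFunctionSpace X₁.toFunctionSpace, S (c • x) = c • S x)
    (hpos : IsPositiveOn X₀.toFunctionSpace X₁.toFunctionSpace S)
    {v : Ω →ₘ[μ] ℝ} (hv : v ∈ sumSet X₀.toFunctionSpace X₁.toFunctionSpace) :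
    ∀ᵐ ω ∂μ, |(S v) ω| ≤ (S |v|) ω := by
  have hav : |v| ∈ sumSet X₀.toFunctionSpace X₁.toFunctionSpace := sumSet_abs hv
  have h1 : v ≤ |v| := by
    apply le_of_coe'
    filter_upwards [MeasureTheory.AEEqFun.coeFn_abs v] with ω e1
    rw [e1]; exact le_abs_self _
  have h2 : (-1 : ℝ) • |v| ≤ v := by
    apply le_of_coe'
    filter_upwards [MeasureTheory.AEEqFun.coeFn_abs v,
      MeasureTheory.AEEqFun.coeFn_smul (-1 : ℝ) |v|] with ω e1 e2
    rw [e2, Pi.smul_apply]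
    show (-1 : ℝ) * _ ≤ _
    rw [e1]
    simpa using neg_abs_le (v ω)
  have hm1 : S v ≤ S |v| := S_mono S hadd hpos hv hav h1
  have hm2 : S ((-1 : ℝ) • |v|) ≤ S v := S_mono S hadd hpos (sumSet_smul _ hav) hv h2
  rw [hsmul (-1 : ℝ) _ hav] at hm2
  filter_upwards [coe_of_le' hm1, coe_of_le' hm2,
    MeasureTheory.AEEqFun.coeFn_smul (-1 : ℝ) (S |v|)] with ω e1 e2 e3
  rw [e3, Pi.smul_apply] at e2
  have : (-1 : ℝ) * (S |v|) ω ≤ (S v) ω := e2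
  rw [abs_le]; constructor <;> linarith

lemma S_holder {p : ℝ} (hp : 1 < p) (S : (Ω →ₘ[μ] ℝ) → (Ω →ₘ[μ] ℝ))
    (hadd : ∀ x ∈ sumSet X₀.toFunctionSpace X₁.toFunctionSpace,
      ∀ y ∈ sumSet X₀.toFunctionSpace X₁.toFunctionSpace, S (x + y) = S x + S y)
    (hsmul : ∀ (c : ℝ), ∀ x ∈ sumSet X₀.toFunctionSpace X₁.toFunctionSpace, S (c • x) = c • S x)
    (hpos : IsPositiveOn X₀.toFunctionSpace X₁.toFunctionSpace S)
    {A B v : Ω →ₘ[μ] ℝ}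
    (hA : A ∈ sumSet X₀.toFunctionSpace X₁.toFunctionSpace)
    (hB : B ∈ sumSet X₀.toFunctionSpace X₁.toFunctionSpace)
    (hA0 : 0 ≤ A) (hB0 : 0 ≤ B)
    (hv : v ∈ sumSet X₀.toFunctionSpace X₁.toFunctionSpace)
    (hvle : ∀ᵐ ω ∂μ, |v ω| ≤ (A ω) ^ (1 - 1/p) * (B ω) ^ (1/p)) :
    ∀ᵐ ω ∂μ, (S v) ω ≤ (1 + 2 ^ (p-1)) * (((S A) ω) ^ (1 - 1/p) * ((S B) ω) ^ (1/p)) := by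
  have key : ∀ q : ℚ, 0 < (q : ℝ) → ∀ᵐ ω ∂μ,
      (S v) ω ≤ (1 - 1/p) * ((q : ℝ) * (S A) ω) + (1/p) * ((q : ℝ) ^ (1-p) * (S B) ω) := by
    intro q hq
    set Yq : Ω →ₘ[μ] ℝ := ((1 - 1/p) * (q : ℝ)) • A + ((1/p) * (q : ℝ) ^ (1-p)) • B with hYdef
    have hYmem : Yq ∈ sumSet X₀.toFunctionSpace X₁.toFunctionSpace :=
      sumSet_add (sumSet_smul _ hA) (sumSet_smul _ hB)
    have hvY : v ≤ Yq := by
      apply le_of_coe'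
      filter_upwards [hvle, coe_nonneg' hA0, coe_nonneg' hB0,
        MeasureTheory.AEEqFun.coeFn_add (((1 - 1/p) * (q : ℝ)) • A) (((1/p) * (q : ℝ) ^ (1-p)) • B),
        MeasureTheory.AEEqFun.coeFn_smul ((1 - 1/p) * (q : ℝ)) A,
        MeasureTheory.AEEqFun.coeFn_smul ((1/p) * (q : ℝ) ^ (1-p)) B] with ω e1 e2 e3 e4 e5 e6
      rw [hYdef, e4, Pi.add_apply, e5, e6, Pi.smul_apply, Pi.smul_apply]
      simp only [smul_eq_mul]
      have hy := helper_young hp e2 e3 hq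
      calc v ω ≤ |v ω| := le_abs_self _
        _ ≤ (A ω) ^ (1 - 1/p) * (B ω) ^ (1/p) := e1
        _ ≤ (1 - 1/p) * ((q:ℝ) * A ω) + (1/p) * ((q:ℝ) ^ (1-p) * B ω) := hy
        _ = (1 - 1/p) * (q:ℝ) * A ω + (1/p) * (q:ℝ) ^ (1-p) * B ω := by ring
    have hSvY : S v ≤ S Yq := S_mono S hadd hpos hv hYmem hvY
    have hSY : S Yq = ((1 - 1/p) * (q : ℝ)) • S A + ((1/p) * (q : ℝ) ^ (1-p)) • S B := by
      rw [hYdef, hadd _ (sumSet_smul _ hA) _ (sumSet_smul _ hB),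
        hsmul _ _ hA, hsmul _ _ hB]
    have hSYcoe : (S Yq : Ω → ℝ) =ᵐ[μ]
        ↑(((1 - 1/p) * (q : ℝ)) • S A) + ↑(((1/p) * (q : ℝ) ^ (1-p)) • S B) := by
      rw [hSY]; exact MeasureTheory.AEEqFun.coeFn_add _ _
    filter_upwards [coe_of_le' hSvY, hSYcoe,
      MeasureTheory.AEEqFun.coeFn_smul ((1 - 1/p) * (q : ℝ)) (S A),
      MeasureTheory.AEEqFun.coeFn_smul ((1/p) * (q : ℝ) ^ (1-p)) (S B)] with ω e1 e2 e3 e4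
    rw [e2, Pi.add_apply, e3, e4, Pi.smul_apply, Pi.smul_apply] at e1
    simp only [smul_eq_mul] at e1
    calc (S v) ω ≤ (1 - 1/p) * (q:ℝ) * (S A) ω + (1/p) * (q:ℝ) ^ (1-p) * (S B) ω := e1
      _ = (1 - 1/p) * ((q : ℝ) * (S A) ω) + (1/p) * ((q : ℝ) ^ (1-p) * (S B) ω) := by ring
  have hall : ∀ᵐ ω ∂μ, ∀ q : ℚ, 0 < (q : ℝ) →
      (S v) ω ≤ (1 - 1/p) * ((q : ℝ) * (S A) ω) + (1/p) * ((q : ℝ) ^ (1-p) * (S B) ω) := by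
    rw [MeasureTheory.ae_all_iff]
    intro q
    by_cases hq : 0 < (q : ℝ)
    · filter_upwards [key q hq] with ω hω
      intro _; exact hω
    · filter_upwards with ω h
      exact absurd h hq
  have hSA0 : ∀ᵐ ω ∂μ, 0 ≤ (S A) ω := coe_nonneg' (hpos A hA hA0)
  have hSB0 : ∀ᵐ ω ∂μ, 0 ≤ (S B) ω := coe_nonneg' (hpos B hB hB0)
  filter_upwards [hall, hSA0, hSB0] with ω h1 h2 h3
  exact helper_young_inf hp h2 h3 (fun q hq => h1 q hq)

end OperatorLemmas

section Mult
variable {X₀ X₁ : BanachFunctionLattice Ω μ}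

lemma abs_sgn_eq_one {x : ℝ} (hx : x ≠ 0) : |sgn x| = 1 := by
  unfold sgn
  rcases lt_trichotomy x 0 with h | h | h
  · simp [h]
  · exact absurd h hx
  · rw [if_neg (by linarith), if_neg (by linarith)]; simp

lemma sgn_mul_self (x : ℝ) : sgn x * x = |x| := by
  unfold sgn
  rcases lt_trichotomy x 0 with h | h | h
  · simp [h, abs_of_neg h]
  · simp [h]
  · rw [if_neg (by linarith), if_neg (by linarith), abs_of_pos h, one_mul]

/-- Multiplier `|f|^(p-1) sgn f`. -/
noncomputable def multU (p : ℝ) (f : Ω →ₘ[μ] ℝ) : Ω →ₘ[μ] ℝ :=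
  MeasureTheory.AEEqFun.mk (fun ω => |f ω| ^ (p-1) * sgn (f ω))
    ((((by measurability : Measurable fun x : ℝ => |x| ^ (p-1)).mul
      measurable_sgn).comp_aemeasurable f.aemeasurable).aestronglyMeasurable)

/-- Multiplier `sgn g · |g|^(1-p)`. -/
noncomputable def multW (p : ℝ) (g : Ω →ₘ[μ] ℝ) : Ω →ₘ[μ] ℝ :=
  MeasureTheory.AEEqFun.mk (fun ω => sgn (g ω) * |g ω| ^ (1-p))
    (((measurable_sgn.mul
      (by measurability : Measurable fun x : ℝ => |x| ^ (1-p))).comp_aemeasurable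
      g.aemeasurable).aestronglyMeasurable)

lemma multU_coe (p : ℝ) (f : Ω →ₘ[μ] ℝ) :
    (multU p f : Ω → ℝ) =ᵐ[μ] fun ω => |f ω| ^ (p-1) * sgn (f ω) :=
  MeasureTheory.AEEqFun.coeFn_mk _ _

lemma multW_coe (p : ℝ) (g : Ω →ₘ[μ] ℝ) :
    (multW p g : Ω → ℝ) =ᵐ[μ] fun ω => sgn (g ω) * |g ω| ^ (1-p) :=
  MeasureTheory.AEEqFun.coeFn_mk _ _

lemma abs_rpow_pred_mul {p x : ℝ} (hp : 1 < p) : |x| ^ (p-1) * |x| = |x| ^ p := by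
  rcases eq_or_ne x 0 with h | h
  · rw [h]
    simp [Real.zero_rpow (by linarith : p - 1 ≠ 0), Real.zero_rpow (by linarith : p ≠ 0)]
  · have hx : 0 < |x| := abs_pos.mpr h
    rw [show |x| ^ p = |x| ^ ((p-1) + 1) by ring_nf, Real.rpow_add hx, Real.rpow_one]

lemma multU_mul_self {p : ℝ} (hp : 1 < p) (f : Ω →ₘ[μ] ℝ) :
    multU p f * f = absRpow p f := by
  apply MeasureTheory.AEEqFun.ext
  filter_upwards [MeasureTheory.AEEqFun.coeFn_mul (multU p f) f, multU_coe p f,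
    absRpow_coe p f] with ω e1 e2 e3
  rw [e1, Pi.mul_apply, e2, e3]
  show |f ω| ^ (p-1) * sgn (f ω) * f ω = _
  rw [mul_assoc, sgn_mul_self, abs_rpow_pred_mul hp]

lemma rpow_one_sub_cancel {p x : ℝ} (hx : x ≠ 0) : |x| ^ (1-p) * |x| ^ p = |x| := by
  have h : 0 < |x| := abs_pos.mpr hx
  rw [← Real.rpow_add h, show (1-p) + p = 1 by ring, Real.rpow_one]

lemma multW_mul_G {p : ℝ} (hp : 1 < p) (g : Ω →ₘ[μ] ℝ) :
    multW p g * absRpow p g = g := by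
  apply MeasureTheory.AEEqFun.ext
  filter_upwards [MeasureTheory.AEEqFun.coeFn_mul (multW p g) (absRpow p g),
    multW_coe p g, absRpow_coe p g] with ω e1 e2 e3
  rw [e1, Pi.mul_apply, e2, e3]
  show sgn (g ω) * |g ω| ^ (1-p) * |g ω| ^ p = g ω
  rcases eq_or_ne (g ω) 0 with h | h
  · rw [h, sgn_zero]; ring
  · rw [mul_assoc, rpow_one_sub_cancel h, sgn_mul_abs]

lemma sumP_mem_left {p : ℝ} (hp : p ≠ 0) {x : Ω →ₘ[μ] ℝ} (hx : x ∈ (pConv X₀ p).carrier) :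
    x ∈ sumSet (pConv X₀ p) (pConv X₁ p) :=
  ⟨x, hx, 0, show absRpow p 0 ∈ X₁.carrier by rw [absRpow_zero hp]; exact X₁.zero_mem,
    (add_zero x).symm⟩

lemma sumP_mem_right {p : ℝ} (hp : p ≠ 0) {x : Ω →ₘ[μ] ℝ} (hx : x ∈ (pConv X₁ p).carrier) :
    x ∈ sumSet (pConv X₀ p) (pConv X₁ p) :=
  ⟨0, show absRpow p 0 ∈ X₀.carrier by rw [absRpow_zero hp]; exact X₀.zero_mem, x, hx,
    (zero_add x).symm⟩

lemma sumP_to_sumX {p : ℝ} (hp : 1 < p) {h : Ω →ₘ[μ] ℝ}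
    (hh : h ∈ sumSet (pConv X₀ p) (pConv X₁ p)) :
    absRpow p h ∈ sumSet X₀.toFunctionSpace X₁.toFunctionSpace := by
  obtain ⟨a₀, h₀, a₁, h₁, rfl⟩ := hh
  obtain ⟨b₀, b₁, hb₀, hb₁, hsum, _, _⟩ := dir1 hp h₀ h₁
  exact ⟨b₀, hb₀, b₁, hb₁, hsum⟩

/-- membership of `multU p f * h` in the base sum space, given Young domination. -/
lemma multU_mul_mem {p : ℝ} (hp : 1 < p) {f h : Ω →ₘ[μ] ℝ}
    (hf : f ∈ sumSet (pConv X₀ p) (pConv X₁ p))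
    (hh : h ∈ sumSet (pConv X₀ p) (pConv X₁ p)) :
    multU p f * h ∈ sumSet X₀.toFunctionSpace X₁.toFunctionSpace := by
  have hp0 : (0:ℝ) < p := by linarith
  have hF : absRpow p f ∈ sumSet X₀.toFunctionSpace X₁.toFunctionSpace := sumP_to_sumX hp hf
  have hH : absRpow p h ∈ sumSet X₀.toFunctionSpace X₁.toFunctionSpace := sumP_to_sumX hp hh
  set Y : Ω →ₘ[μ] ℝ := (1 - 1/p) • absRpow p f + (1/p) • absRpow p h with hYdef
  have hYmem : Y ∈ sumSet X₀.toFunctionSpace X₁.toFunctionSpace :=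
    sumSet_add (sumSet_smul _ hF) (sumSet_smul _ hH)
  apply sumSet_ideal hYmem
  apply abs_le_iff_coe'
  filter_upwards [MeasureTheory.AEEqFun.coeFn_mul (multU p f) h, multU_coe p f,
    MeasureTheory.AEEqFun.coeFn_add ((1 - 1/p) • absRpow p f) ((1/p) • absRpow p h),
    MeasureTheory.AEEqFun.coeFn_smul (1 - 1/p : ℝ) (absRpow p f),
    MeasureTheory.AEEqFun.coeFn_smul (1/p : ℝ) (absRpow p h),
    absRpow_coe p f, absRpow_coe p h] with ω e1 e2 e3 e4 e5 e6 e7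
  rw [e1, Pi.mul_apply, e2, hYdef, e3, Pi.add_apply, e4, e5, Pi.smul_apply, Pi.smul_apply]
  simp only [smul_eq_mul]
  rw [e6, e7]
  have hxnn := Real.rpow_nonneg (abs_nonneg (f ω)) p
  have hynn := Real.rpow_nonneg (abs_nonneg (h ω)) p
  have hYnn : (0:ℝ) ≤ (1 - 1/p) * (|f ω| ^ p) + (1/p) * (|h ω| ^ p) := by
    have hco1 : (0:ℝ) ≤ 1 - 1/p := by
      have : 1/p < 1 := by rw [div_lt_one hp0]; exact hp
      linarith
    positivity
  rw [abs_of_nonneg hYnn]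
  have hstep1 : |(|f ω| ^ (p-1) * sgn (f ω)) * h ω| ≤ |f ω| ^ (p-1) * |h ω| := by
    rw [abs_mul, abs_mul, abs_of_nonneg (Real.rpow_nonneg (abs_nonneg _) _)]
    rcases eq_or_ne (f ω) 0 with hz | hz
    · rw [hz, sgn_zero, abs_zero, mul_zero, zero_mul]
      positivity
    · rw [abs_sgn_eq_one hz, mul_one]
  have hid1 : (|f ω| ^ p) ^ (1 - 1/p) = |f ω| ^ (p-1) := by
    rw [← Real.rpow_mul (abs_nonneg _)]
    congr 1
    field_simp
  have hid2 : (|h ω| ^ p) ^ ((1:ℝ)/p) = |h ω| := by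
    rw [← Real.rpow_mul (abs_nonneg _), mul_one_div, div_self hp0.ne', Real.rpow_one]
  have hy := helper_young hp hxnn hynn one_pos
  rw [hid1, hid2, Real.one_rpow, one_mul, one_mul] at hy
  exact le_trans hstep1 hy

lemma wg_cancel {p : ℝ} (hp : 1 < p) (x : ℝ) :
    |sgn x * |x| ^ (1-p)| * (|x| ^ p) ^ (1 - 1/p) ≤ 1 := by
  rcases eq_or_ne x 0 with h | h
  · rw [h, sgn_zero, zero_mul, abs_zero, zero_mul]; norm_num
  · have hx : 0 < |x| := abs_pos.mpr h
    have e1 : (|x| ^ p) ^ (1 - 1/p) = |x| ^ (p - 1) := by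
      rw [← Real.rpow_mul hx.le]
      congr 1
      field_simp
    rw [abs_mul, abs_sgn_eq_one h, one_mul, abs_of_nonneg (Real.rpow_nonneg hx.le _), e1,
      ← Real.rpow_add hx, show (1-p) + (p-1) = 0 by ring, Real.rpow_zero]

end Mult

end Helpers

/-- If `(X₀, X₁)` is a positive Calderón couple of Banach lattices of
measurable functions on a common measure space, and `X₀` and `X₁` are complete lattices,
then for every `p ∈ (1, ∞)` the couple of `p`-convexifications `(X₀^(p), X₁^(p))` is a
Calderón couple. -/
theorem pConv_isCalderonCouple
    (X₀ X₁ : BanachFunctionLattice Ω μ)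
    (hpos : IsPositiveCalderonCouple X₀.toFunctionSpace X₁.toFunctionSpace)
    (h₀ : HasLUBP X₀.carrier) (h₁ : HasLUBP X₁.carrier)
    (p : ℝ) (hp : 1 < p) :
    IsCalderonCouple (pConv X₀ p) (pConv X₁ p) := by
  intro f hf g hg hK
  have hp0 : (0:ℝ) < p := by linarith
  have hpne : p ≠ 0 := hp0.ne'
  set F : Ω →ₘ[μ] ℝ := absRpow p f with hFdef
  set G : Ω →ₘ[μ] ℝ := absRpow p g with hGdef
  set c : ℝ := 2 ^ (2*p+1) with hcdef
  have hc : 0 < c := Real.rpow_pos_of_pos (by norm_num) _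
  have hFmem : F ∈ sumSet X₀.toFunctionSpace X₁.toFunctionSpace := sumP_to_sumX hp hf
  have hGmem : G ∈ sumSet X₀.toFunctionSpace X₁.toFunctionSpace := sumP_to_sumX hp hg
  have hcFmem : c • F ∈ sumSet X₀.toFunctionSpace X₁.toFunctionSpace := sumSet_smul c hFmem
  have hF0 : (0 : Ω →ₘ[μ] ℝ) ≤ F := absRpow_nonneg p f
  have hG0 : (0 : Ω →ₘ[μ] ℝ) ≤ G := absRpow_nonneg p g
  have hcF0 : (0 : Ω →ₘ[μ] ℝ) ≤ c • F := by
    apply nonneg_of_coe'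
    filter_upwards [coe_nonneg' hF0, MeasureTheory.AEEqFun.coeFn_smul c F] with ω e1 e2
    rw [e2, Pi.smul_apply, smul_eq_mul]
    exact mul_nonneg hc.le e1
  have hKbase : ∀ t > 0, Kfun X₀.toFunctionSpace X₁.toFunctionSpace t G ≤
      Kfun X₀.toFunctionSpace X₁.toFunctionSpace t (c • F) := by
    intro t ht
    have htp : (0:ℝ) < t ^ (1/p) := Real.rpow_pos_of_pos ht _
    have h1 := chain_a (X₀ := X₀) (X₁ := X₁) hp ht hg
    have h2 := chain_b (X₀ := X₀) (X₁ := X₁) hp ht hg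
    have h3 := hK (t ^ (1/p)) htp
    have h4 := chain_c (X₀ := X₀) (X₁ := X₁) hp ht hf
    have h5 := chain_d (X₀ := X₀) (X₁ := X₁) hp ht hf
    have hKPf0 : 0 ≤ Kfun (pConv X₀ p) (pConv X₁ p) (t ^ (1/p)) f :=
      KP_nonneg (X₀ := X₀) (X₁ := X₁) htp.le f
    have hKPg0 : 0 ≤ Kfun (pConv X₀ p) (pConv X₁ p) (t ^ (1/p)) g :=
      KP_nonneg (X₀ := X₀) (X₁ := X₁) htp.le g
    have hKp_f0 : 0 ≤ KpAux X₀ X₁ p t f := Kp_nonneg (X₀ := X₀) (X₁ := X₁) ht.le f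
    have h2p : (0:ℝ) ≤ 2 ^ p := Real.rpow_nonneg (by norm_num) p
    have h6 : (Kfun (pConv X₀ p) (pConv X₁ p) (t^(1/p)) g) ^ p ≤
        (Kfun (pConv X₀ p) (pConv X₁ p) (t^(1/p)) f) ^ p :=
      Real.rpow_le_rpow hKPg0 h3 hp0.le
    have h7 : (Kfun (pConv X₀ p) (pConv X₁ p) (t^(1/p)) f) ^ p ≤
        2^p * KpAux X₀ X₁ p t f := by
      calc (Kfun (pConv X₀ p) (pConv X₁ p) (t^(1/p)) f) ^ p
          ≤ (2 * (KpAux X₀ X₁ p t f)^(1/p)) ^ p := Real.rpow_le_rpow hKPf0 h4 hp0.le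
        _ = 2^p * KpAux X₀ X₁ p t f := by
            rw [Real.mul_rpow (by norm_num) (Real.rpow_nonneg hKp_f0 _),
              ← Real.rpow_mul hKp_f0, one_div, inv_mul_cancel₀ hp0.ne', Real.rpow_one]
    have hcsplit : c = 2^p * (2 * (2^p)) := by
      rw [hcdef, show 2*p+1 = p + (p + 1) by ring, Real.rpow_add (by norm_num : (0:ℝ) < 2),
        Real.rpow_add (by norm_num : (0:ℝ) < 2), Real.rpow_one]
      ring
    calc Kfun X₀.toFunctionSpace X₁.toFunctionSpace t G
        ≤ 2^p * KpAux X₀ X₁ p t g := h1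
      _ ≤ 2^p * (2 * (Kfun (pConv X₀ p) (pConv X₁ p) (t^(1/p)) g) ^ p) :=
          mul_le_mul_of_nonneg_left h2 h2p
      _ ≤ 2^p * (2 * (Kfun (pConv X₀ p) (pConv X₁ p) (t^(1/p)) f) ^ p) := by
          apply mul_le_mul_of_nonneg_left _ h2p
          linarith
      _ ≤ 2^p * (2 * (2^p * KpAux X₀ X₁ p t f)) := by
          apply mul_le_mul_of_nonneg_left _ h2p
          exact mul_le_mul_of_nonneg_left h7 (by norm_num)
      _ = c * KpAux X₀ X₁ p t f := by rw [hcsplit]; ring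
      _ ≤ c * Kfun X₀.toFunctionSpace X₁.toFunctionSpace t F :=
          mul_le_mul_of_nonneg_left h5 hc.le
      _ ≤ Kfun X₀.toFunctionSpace X₁.toFunctionSpace t (c • F) :=
          K_smul_ge ht.le hc hFmem
  obtain ⟨S, hSop, hSposOn, hSF⟩ := hpos (c • F) hcFmem G hGmem hcF0 hG0 hKbase
  obtain ⟨hadd, hsmul, hmap₀, hmap₁, ⟨C₀, hC₀⟩, ⟨C₁, hC₁⟩⟩ := hSop
  set T : (Ω →ₘ[μ] ℝ) → (Ω →ₘ[μ] ℝ) :=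
    fun h => multW p g * S (c • (multU p f * h)) with hTdef
  have hUarg : ∀ h ∈ sumSet (pConv X₀ p) (pConv X₁ p),
      c • (multU p f * h) ∈ sumSet X₀.toFunctionSpace X₁.toFunctionSpace :=
    fun h hh => sumSet_smul c (multU_mul_mem hp hf hh)
  have hTf : T f = g := by
    show multW p g * S (c • (multU p f * f)) = g
    rw [multU_mul_self hp f]
    rw [show S (c • absRpow p f) = G from hSF]
    exact multW_mul_G hp g
  have hTadd : ∀ x ∈ sumSet (pConv X₀ p) (pConv X₁ p),
      ∀ y ∈ sumSet (pConv X₀ p) (pConv X₁ p), T (x + y) = T x + T y := by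
    intro x hx y hy
    show multW p g * S (c • (multU p f * (x + y))) = _
    rw [mul_add' (multU p f) x y, smul_add, hadd _ (hUarg x hx) _ (hUarg y hy), mul_add']
  have hTsmul : ∀ (a : ℝ), ∀ x ∈ sumSet (pConv X₀ p) (pConv X₁ p), T (a • x) = a • T x := by
    intro a x hx
    show multW p g * S (c • (multU p f * (a • x))) = _
    rw [mul_smul' a (multU p f) x, smul_comm c a, hsmul a _ (hUarg x hx), mul_smul']
  -- central pointwise bound
  set κ : ℝ := (1 + 2 ^ (p-1)) ^ p * c with hκdef
  have h2pm : (0:ℝ) < 1 + 2 ^ (p-1) := by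
    have := Real.rpow_nonneg (by norm_num : (0:ℝ) ≤ 2) (p-1)
    linarith
  have hκ0 : 0 ≤ κ := mul_nonneg (Real.rpow_nonneg h2pm.le _) hc.le
  have hcentral : ∀ h ∈ sumSet (pConv X₀ p) (pConv X₁ p),
      ∀ᵐ ω ∂μ, |(T h) ω| ^ p ≤ κ * (S (absRpow p h)) ω := by
    intro h hh
    set H : Ω →ₘ[μ] ℝ := absRpow p h with hHdef
    have hHsum : H ∈ sumSet X₀.toFunctionSpace X₁.toFunctionSpace := sumP_to_sumX hp hh
    have hH0 : (0 : Ω →ₘ[μ] ℝ) ≤ H := absRpow_nonneg p h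
    set v : Ω →ₘ[μ] ℝ := c • (multU p f * h) with hvdef
    have hvmem : v ∈ sumSet X₀.toFunctionSpace X₁.toFunctionSpace := hUarg h hh
    have havmem : |v| ∈ sumSet X₀.toFunctionSpace X₁.toFunctionSpace := sumSet_abs hvmem
    have hBmem : c • H ∈ sumSet X₀.toFunctionSpace X₁.toFunctionSpace := sumSet_smul c hHsum
    have hB0 : (0 : Ω →ₘ[μ] ℝ) ≤ c • H := by
      apply nonneg_of_coe'
      filter_upwards [coe_nonneg' hH0, MeasureTheory.AEEqFun.coeFn_smul c H] with ω e1 e2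
      rw [e2, Pi.smul_apply, smul_eq_mul]
      exact mul_nonneg hc.le e1
    have hvle : ∀ᵐ ω ∂μ, |(|v| : Ω →ₘ[μ] ℝ) ω| ≤
        ((c • F : Ω →ₘ[μ] ℝ) ω) ^ (1 - 1/p) * ((c • H : Ω →ₘ[μ] ℝ) ω) ^ (1/p) := by
      filter_upwards [MeasureTheory.AEEqFun.coeFn_abs v,
        MeasureTheory.AEEqFun.coeFn_smul c (multU p f * h),
        MeasureTheory.AEEqFun.coeFn_mul (multU p f) h, multU_coe p f,
        MeasureTheory.AEEqFun.coeFn_smul c F, MeasureTheory.AEEqFun.coeFn_smul c H,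
        absRpow_coe p f, absRpow_coe p h] with ω e1 e2 e3 e4 e5 e6 e7 e8
      rw [e1, abs_abs]
      show |v ω| ≤ _
      rw [hvdef, e2, Pi.smul_apply, smul_eq_mul, e5, e6, Pi.smul_apply, Pi.smul_apply]
      simp only [smul_eq_mul]
      rw [e7, e8, Pi.mul_apply] at *
      rw [e3]
      show |c * ((multU p f) ω * h ω)| ≤ _
      rw [e4]
      have haf := abs_nonneg (f ω)
      have hah := abs_nonneg (h ω)
      have hstep1 : |c * (|f ω| ^ (p-1) * sgn (f ω) * h ω)| ≤
          c * (|f ω| ^ (p-1) * |h ω|) := by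
        rw [abs_mul, abs_of_nonneg hc.le, abs_mul, abs_mul,
          abs_of_nonneg (Real.rpow_nonneg haf _)]
        apply mul_le_mul_of_nonneg_left _ hc.le
        rcases eq_or_ne (f ω) 0 with hz | hz
        · rw [hz, sgn_zero, abs_zero, mul_zero, zero_mul]
          positivity
        · rw [abs_sgn_eq_one hz, mul_one]
      have hid : (c * |f ω| ^ p) ^ (1 - 1/p) * (c * |h ω| ^ p) ^ (1/p) =
          c * (|f ω| ^ (p-1) * |h ω|) := by
        rw [Real.mul_rpow hc.le (Real.rpow_nonneg haf _),
          Real.mul_rpow hc.le (Real.rpow_nonneg hah _),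
          ← Real.rpow_mul haf, ← Real.rpow_mul hah]
        have ef : p * (1 - 1/p) = p - 1 := by field_simp
        have eh : p * (1/p) = 1 := by field_simp
        rw [ef, eh, Real.rpow_one]
        have ec : c ^ (1 - 1/p) * c ^ ((1:ℝ)/p) = c := by
          rw [← Real.rpow_add hc, show (1 - 1/p) + (1:ℝ)/p = 1 by ring, Real.rpow_one]
        calc c ^ (1 - 1/p) * |f ω| ^ (p-1) * (c ^ ((1:ℝ)/p) * |h ω|)
            = (c ^ (1 - 1/p) * c ^ ((1:ℝ)/p)) * (|f ω| ^ (p-1) * |h ω|) := by ring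
          _ = c * (|f ω| ^ (p-1) * |h ω|) := by rw [ec]
      rw [hid]
      exact hstep1
    have hhold := S_holder hp S hadd hsmul hSposOn hcFmem hBmem hcF0 hB0 havmem hvle
    have habsS := S_abs_le S hadd hsmul hSposOn hvmem
    have hSB : S (c • H) = c • S H := hsmul c H hHsum
    have hSH0 : ∀ᵐ ω ∂μ, 0 ≤ (S H) ω := coe_nonneg' (hSposOn H hHsum hH0)
    have hGcoe : (S (c • F) : Ω → ℝ) =ᵐ[μ] fun ω => |g ω| ^ p := by
      rw [show S (c • F) = G from hSF]
      exact absRpow_coe p g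
    have hSBcoe : (S (c • H) : Ω → ℝ) =ᵐ[μ] fun ω => c * (S H) ω := by
      rw [hSB]
      filter_upwards [MeasureTheory.AEEqFun.coeFn_smul c (S H)] with ω e
      rw [e, Pi.smul_apply, smul_eq_mul]
    have hTcoe : (T h : Ω → ℝ) =ᵐ[μ] fun ω => (sgn (g ω) * |g ω| ^ (1-p)) * (S v) ω := by
      filter_upwards [MeasureTheory.AEEqFun.coeFn_mul (multW p g) (S v),
        multW_coe p g] with ω e1 e2
      rw [hTdef]
      show (multW p g * S v : Ω →ₘ[μ] ℝ) ω = _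
      rw [e1, Pi.mul_apply, e2]
    filter_upwards [hTcoe, habsS, hhold, hGcoe, hSBcoe, hSH0] with ω e1 e2 e3 e4 e5 e6
    rw [e1]
    have hSv0 : 0 ≤ (S |v|) ω := le_trans (abs_nonneg _) e2
    have hwg := wg_cancel hp (g ω)
    have hcu0 : 0 ≤ c * (S H) ω := mul_nonneg hc.le e6
    have hW0 : 0 ≤ |sgn (g ω) * |g ω| ^ (1-p)| := abs_nonneg _
    have hstep : |sgn (g ω) * |g ω| ^ (1-p) * (S v) ω| ≤
        (1 + 2 ^ (p-1)) * (c * (S H) ω) ^ (1/p) := by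
      rw [abs_mul]
      calc |sgn (g ω) * |g ω| ^ (1-p)| * |(S v) ω|
          ≤ |sgn (g ω) * |g ω| ^ (1-p)| * ((S |v|) ω) :=
            mul_le_mul_of_nonneg_left e2 hW0
        _ ≤ |sgn (g ω) * |g ω| ^ (1-p)| *
            ((1 + 2 ^ (p-1)) * (((S (c • F)) ω) ^ (1 - 1/p) * ((S (c • H)) ω) ^ (1/p))) :=
            mul_le_mul_of_nonneg_left e3 hW0
        _ = (1 + 2 ^ (p-1)) * ((|sgn (g ω) * |g ω| ^ (1-p)| * ((S (c • F)) ω) ^ (1 - 1/p)) *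
            ((S (c • H)) ω) ^ (1/p)) := by ring
        _ ≤ (1 + 2 ^ (p-1)) * (1 * ((S (c • H)) ω) ^ (1/p)) := by
            apply mul_le_mul_of_nonneg_left _ h2pm.le
            apply mul_le_mul_of_nonneg_right _ ?_
            · rw [e4]; exact hwg
            · rw [e5]; exact Real.rpow_nonneg hcu0 _
        _ = (1 + 2 ^ (p-1)) * (c * (S H) ω) ^ (1/p) := by rw [e5]; ring
    calc |sgn (g ω) * |g ω| ^ (1-p) * (S v) ω| ^ p
        ≤ ((1 + 2 ^ (p-1)) * (c * (S H) ω) ^ (1/p)) ^ p := by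
          apply Real.rpow_le_rpow (abs_nonneg _) hstep hp0.le
      _ = κ * (S H) ω := by
          rw [Real.mul_rpow h2pm.le (Real.rpow_nonneg hcu0 _),
            ← Real.rpow_mul hcu0, one_div, inv_mul_cancel₀ hp0.ne', Real.rpow_one, hκdef]
          ring
  -- carrier mapping and norm bounds
  have hbound : ∀ (X : BanachFunctionLattice Ω μ),
      (∀ x ∈ X.carrier, S x ∈ X.carrier) →
      ∀ (C : ℝ), (∀ x ∈ X.carrier, X.norm (S x) ≤ C * X.norm x) →
      ∀ h, h ∈ sumSet (pConv X₀ p) (pConv X₁ p) → absRpow p h ∈ X.carrier →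
        absRpow p (T h) ∈ X.carrier ∧
        X.norm (absRpow p (T h)) ≤ κ * max C 0 * X.norm (absRpow p h) := by
    intro X hmap C hC h hh hmem
    have hSH : S (absRpow p h) ∈ X.carrier := hmap _ hmem
    have hκSH : κ • S (absRpow p h) ∈ X.carrier := X.smul_mem κ hSH
    have hSH0 : ∀ᵐ ω ∂μ, 0 ≤ (S (absRpow p h)) ω :=
      coe_nonneg' (hSposOn _ (sumP_to_sumX hp hh) (absRpow_nonneg p h))
    have habs : |absRpow p (T h)| ≤ |κ • S (absRpow p h)| := by
      apply abs_le_iff_coe'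
      filter_upwards [hcentral h hh, absRpow_coe p (T h),
        MeasureTheory.AEEqFun.coeFn_smul κ (S (absRpow p h)), hSH0] with ω e1 e2 e3 e4
      rw [e2, e3, Pi.smul_apply, smul_eq_mul,
        abs_of_nonneg (Real.rpow_nonneg (abs_nonneg _) p)]
      exact le_trans e1 (le_abs_self _)
    refine ⟨X.ideal_mem _ hκSH _ habs, ?_⟩
    calc X.norm (absRpow p (T h)) ≤ X.norm (κ • S (absRpow p h)) :=
          X.ideal_norm_le _ hκSH _ habs
      _ = κ * X.norm (S (absRpow p h)) := by rw [X.norm_smul _ _ hSH, abs_of_nonneg hκ0]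
      _ ≤ κ * (C * X.norm (absRpow p h)) :=
          mul_le_mul_of_nonneg_left (hC _ hmem) hκ0
      _ ≤ κ * max C 0 * X.norm (absRpow p h) := by
          have hn := X.norm_nonneg _ hmem
          have : C * X.norm (absRpow p h) ≤ max C 0 * X.norm (absRpow p h) :=
            mul_le_mul_of_nonneg_right (le_max_left _ _) hn
          calc κ * (C * X.norm (absRpow p h)) ≤ κ * (max C 0 * X.norm (absRpow p h)) :=
                mul_le_mul_of_nonneg_left this hκ0
            _ = κ * max C 0 * X.norm (absRpow p h) := by ring
  have hmapP₀ : ∀ x ∈ (pConv X₀ p).carrier, T x ∈ (pConv X₀ p).carrier := by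
    intro x hx
    exact ((hbound X₀ hmap₀ C₀ hC₀ x (sumP_mem_left hpne hx) hx).1 : _)
  have hmapP₁ : ∀ x ∈ (pConv X₁ p).carrier, T x ∈ (pConv X₁ p).carrier := by
    intro x hx
    exact ((hbound X₁ hmap₁ C₁ hC₁ x (sumP_mem_right hpne hx) hx).1 : _)
  have hnormP₀ : ∀ x ∈ (pConv X₀ p).carrier,
      (pConv X₀ p).norm (T x) ≤ (κ * max C₀ 0) ^ (1/p) * (pConv X₀ p).norm x := by
    intro x hx
    obtain ⟨hmem, hnorm⟩ := hbound X₀ hmap₀ C₀ hC₀ x (sumP_mem_left hpne hx) hx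
    rw [pConv_norm_eq, pConv_norm_eq]
    calc (X₀.norm (absRpow p (T x))) ^ (1/p)
        ≤ (κ * max C₀ 0 * X₀.norm (absRpow p x)) ^ (1/p) :=
          Real.rpow_le_rpow (X₀.norm_nonneg _ hmem) hnorm (by positivity)
      _ = (κ * max C₀ 0) ^ (1/p) * (X₀.norm (absRpow p x)) ^ (1/p) :=
          Real.mul_rpow (by positivity) (X₀.norm_nonneg _ hx)
  have hnormP₁ : ∀ x ∈ (pConv X₁ p).carrier,
      (pConv X₁ p).norm (T x) ≤ (κ * max C₁ 0) ^ (1/p) * (pConv X₁ p).norm x := by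
    intro x hx
    obtain ⟨hmem, hnorm⟩ := hbound X₁ hmap₁ C₁ hC₁ x (sumP_mem_right hpne hx) hx
    rw [pConv_norm_eq, pConv_norm_eq]
    calc (X₁.norm (absRpow p (T x))) ^ (1/p)
        ≤ (κ * max C₁ 0 * X₁.norm (absRpow p x)) ^ (1/p) :=
          Real.rpow_le_rpow (X₁.norm_nonneg _ hmem) hnorm (by positivity)
      _ = (κ * max C₁ 0) ^ (1/p) * (X₁.norm (absRpow p x)) ^ (1/p) :=
          Real.mul_rpow (by positivity) (X₁.norm_nonneg _ hx)
  exact ⟨T, ⟨hTadd, hTsmul, hmapP₀, hmapP₁,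
    ⟨(κ * max C₀ 0) ^ (1/p), hnormP₀⟩, ⟨(κ * max C₁ 0) ^ (1/p), hnormP₁⟩⟩, hTf⟩
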